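/- arXiv:1205.6432 — 5 statements merged into one kernel-verified Lean document; each statement's English description precedes it below -/
import Mathlib

section
/- For all integers d, k ≥ 2, the Natarajan dimension of the multiclass SVM hypothesis class L = {h_W : W ∈ ℝ^{k×(d+1)}} of functions ℝ^d → [k] is at least d·(k−1). -/
open MeasureTheory
open scoped ENNReal

noncomputable def argmaxFin {k : ℕ} [NeZero k] (f : Fin k → ℝ) : Fin k :=
  (Finset.univ.filter fun i => ∀ j, f j ≤ f i).min' (by
    obtain ⟨i, -, hi⟩ := Finset.exists_max_image (Finset.univ : Finset (Fin k)) f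
      ⟨⟨0, Nat.pos_of_ne_zero (NeZero.ne k)⟩, Finset.mem_univ _⟩
    exact ⟨i, Finset.mem_filter.mpr ⟨Finset.mem_univ _, fun j => hi j (Finset.mem_univ _)⟩⟩)

def aug {d : ℕ} (x : Fin d → ℝ) : Fin (d + 1) → ℝ := Fin.snoc x 1

/-- halfspaces over ℝ^d, `true` ↔ +1, sign(0) = 1 -/
def halfspace (d : ℕ) : Set ((Fin d → ℝ) → Bool) :=
  { h | ∃ w : Fin (d + 1) → ℝ, h = fun x => decide (0 ≤ ∑ i, w i * aug x i) }

noncomputable def msvm (d k : ℕ) [NeZero k] : Set ((Fin d → ℝ) → Fin k) :=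
  { h | ∃ W : Fin k → Fin (d + 1) → ℝ,
      h = fun x => argmaxFin (fun i => ∑ j, W i j * aug x j) }

def NShatters {X Y : Type*} (H : Set (X → Y)) (S : Set X) : Prop :=
  ∃ f₁ f₂ : X → Y, (∀ x ∈ S, f₁ x ≠ f₂ x) ∧
    ∀ T ⊆ S, ∃ g ∈ H, (∀ x ∈ T, g x = f₁ x) ∧ ∀ x ∈ S \ T, g x = f₂ x

def GShatters {X Y : Type*} (H : Set (X → Y)) (S : Set X) : Prop :=
  ∃ f : X → Y, ∀ T ⊆ S, ∃ g ∈ H, (∀ x ∈ T, g x = f x) ∧ ∀ x ∈ S \ T, g x ≠ f x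

def VCDimLE {X : Type*} (H : Set (X → Bool)) (d : ℕ) : Prop :=
  ∀ S : Finset X, (∀ b : X → Bool, ∃ h ∈ H, ∀ x ∈ S, h x = b x) → S.card ≤ d

inductive LTree (k : ℕ) : Type where
  | leaf : Fin k → LTree k
  | node : LTree k → LTree k → LTree k

def LTree.labels {k : ℕ} : LTree k → List (Fin k)
  | .leaf i => [i]
  | .node l r => l.labels ++ r.labels

/-- `T` is a tree for `k` classes: its leaf labels form a bijection with `[k]`. -/
def LTree.IsTreeFor {k : ℕ} (T : LTree k) : Prop := T.labels.Perm (List.finRange k)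

def treeClass {X : Type*} {k : ℕ} (H : Set (X → Bool)) : LTree k → Set (X → Fin k)
  | .leaf i => {fun _ => i}
  | .node l r => { f | ∃ c ∈ H, ∃ fl ∈ treeClass H l, ∃ fr ∈ treeClass H r,
      f = fun x => if c x then fr x else fl x }

def treesClass {X : Type*} (H : Set (X → Bool)) (k : ℕ) : Set (X → Fin k) :=
  ⋃ T ∈ { T : LTree k | T.IsTreeFor }, treeClass H T

noncomputable def decode {k : ℕ} [NeZero k] {J : Type*} [Fintype J]
    (M : Fin k → J → ℝ) (u : J → Bool) : Fin k :=
  argmaxFin (fun i => ∑ j, M i j * (if u j then (1 : ℝ) else -1))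

noncomputable def ecocClass {X : Type*} {k : ℕ} [NeZero k] {J : Type*} [Fintype J]
    (H : Set (X → Bool)) (M : Fin k → J → ℝ) : Set (X → Fin k) :=
  { g | ∃ h : J → X → Bool, (∀ j, h j ∈ H) ∧ g = fun x => decode M (fun j => h j x) }

def ovaCode (k : ℕ) : Fin k → Fin k → ℝ := fun i j => if i = j then 1 else -1

def apCode (k : ℕ) : Fin k → { p : Fin k × Fin k // p.1 < p.2 } → ℝ :=
  fun i p => if i = p.1.1 then -1 else if i = p.1.2 then 1 else 0

noncomputable def errStar {X : Type*} [MeasurableSpace X] {k : ℕ}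
    (D : Measure (X × Fin k)) (H : Set (X → Fin k)) : ℝ≥0∞ :=
  ⨅ h ∈ H, D { p | h p.1 ≠ p.2 }

noncomputable def errStarBin {X : Type*} [MeasurableSpace X]
    (Q : Measure (X × Bool)) (H : Set (X → Bool)) : ℝ≥0∞ :=
  ⨅ h ∈ H, Q { p | h p.1 ≠ p.2 }

inductive PTree : Type where
  | leaf : PTree
  | node : PTree → PTree → PTree

def PTree.nLeaves : PTree → ℕ
  | .leaf => 1
  | .node l r => l.nLeaves + r.nLeaves

def PTree.leftLeaves : PTree → ℕ
  | .leaf => 0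
  | .node l _ => l.nLeaves

def PTree.rightLeaves : PTree → ℕ
  | .leaf => 0
  | .node _ r => r.nLeaves

def PTree.labelAux {k : ℕ} (f : ℕ → Fin k) : PTree → ℕ → LTree k
  | .leaf, n => .leaf (f n)
  | .node l r, n => .node (PTree.labelAux f l n) (PTree.labelAux f r (n + l.nLeaves))


section AuxSVM

open Finset

noncomputable def score (d : ℕ) (w : Fin (d+1) → ℝ) (x : Fin d → ℝ) : ℝ := ∑ l, w l * aug x l

lemma score_def (d : ℕ) (w : Fin (d+1) → ℝ) (x : Fin d → ℝ) :
    score d w x = ∑ l, w l * aug x l := rfl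

lemma score_eq (d : ℕ) (w : Fin (d+1) → ℝ) (x : Fin d → ℝ) :
    score d w x = (∑ l : Fin d, w l.castSucc * x l) + w (Fin.last d) := by
  simp [score, aug, Fin.sum_univ_castSucc]

lemma score_add_smul (d : ℕ) (u v : Fin (d+1) → ℝ) (e : ℝ) (x : Fin d → ℝ) :
    score d (fun l => u l + e * v l) x = score d u x + e * score d v x := by
  simp only [score, Finset.mul_sum, ← Finset.sum_add_distrib]
  exact Finset.sum_congr rfl fun l _ => by ring

lemma score_zero (d : ℕ) (x : Fin d → ℝ) : score d (fun _ => 0) x = 0 := by simp [score]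

/-- point of group with parameter `ti`, index `j`. -/
noncomputable def pt (d : ℕ) (ti : ℝ) (j : Fin d) : Fin d → ℝ := fun l =>
  if l.val = 0 then ti + (if j.val = 1 then 1 else 0)
  else if l.val = 1 then ti^2 + (if j.val = 1 then 2*ti else 0)
  else if l = j then 1 else 0

noncomputable def avec (d : ℕ) (ti : ℝ) : Fin (d+1) → ℝ := fun l =>
  if l.val = 0 then 2*ti else if l.val = 1 then -1 else if l.val = d then -(ti^2) else 0

noncomputable def bvec (d : ℕ) (ti : ℝ) (c : Fin d → ℝ) (c0 c1 : ℝ) : Fin (d+1) → ℝ := fun l =>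
  if l.val = 0 then c1 - c0
  else if l.val = 1 then 0
  else if h : l.val < d then c ⟨l.val, h⟩ - c0
  else c0 - (c1 - c0) * ti

lemma ascore (d : ℕ) (hd : 2 ≤ d) (tI ti : ℝ) (j : Fin d) :
    score d (avec d tI) (pt d ti j) =
      -(tI - ti)^2 + (if j.val = 1 then 2*(tI - ti) else 0) := by
  rw [score_eq]
  have hlast : avec d tI (Fin.last d) = -(tI^2) := by
    simp only [avec, Fin.val_last]
    rw [if_neg (by omega), if_neg (by omega)]
    simp
  have hsum : ∀ l : Fin d, avec d tI l.castSucc * pt d ti j l =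
      (if l = (⟨0, by omega⟩ : Fin d) then 2*tI*(ti + (if j.val = 1 then 1 else 0)) else 0)
      + (if l = (⟨1, by omega⟩ : Fin d) then -(ti^2 + (if j.val = 1 then 2*ti else 0)) else 0) := by
    rintro ⟨lv, hl⟩
    rcases lv with _ | _ | n
    · simp [avec, pt, Fin.ext_iff]
    · simp [avec, pt, Fin.ext_iff]
    · have h1 : ¬ ((⟨n+2, hl⟩ : Fin d) = (⟨0, by omega⟩ : Fin d)) := by
        simp [Fin.ext_iff]
      have h2 : ¬ ((⟨n+2, hl⟩ : Fin d) = (⟨1, by omega⟩ : Fin d)) := by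
        simp [Fin.ext_iff]
      rw [if_neg h1, if_neg h2]
      have hv : avec d tI (Fin.castSucc ⟨n+2, hl⟩) = 0 := by
        simp only [avec, Fin.coe_castSucc]
        rw [if_neg (by omega), if_neg (by omega), if_neg (by omega)]
      rw [hv]; ring
  rw [Finset.sum_congr rfl (fun l _ => hsum l), Finset.sum_add_distrib,
    Finset.sum_ite_eq', Finset.sum_ite_eq', hlast]
  simp only [Finset.mem_univ, if_pos]
  by_cases hj : j.val = 1 <;> simp [hj] <;> ring

lemma bscore (d : ℕ) (hd : 2 ≤ d) (ti : ℝ) (c : Fin d → ℝ) (j : Fin d) :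
    score d (bvec d ti c (c ⟨0, by omega⟩) (c ⟨1, by omega⟩)) (pt d ti j) = c j := by
  set c0 := c ⟨0, by omega⟩ with hc0
  set c1 := c ⟨1, by omega⟩ with hc1
  rw [score_eq]
  have hlast : bvec d ti c c0 c1 (Fin.last d) = c0 - (c1-c0)*ti := by
    simp only [bvec, Fin.val_last]
    rw [if_neg (by omega), if_neg (by omega), dif_neg (by omega)]
  rw [hlast]
  have hB0 : ∀ hl : 0 < d, bvec d ti c c0 c1 (Fin.castSucc ⟨0, hl⟩) = c1 - c0 := by
    intro hl
    simp only [bvec, Fin.coe_castSucc]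
    simp
  have hB1 : ∀ hl : 1 < d, bvec d ti c c0 c1 (Fin.castSucc ⟨1, hl⟩) = 0 := by
    intro hl
    simp only [bvec, Fin.coe_castSucc]
    simp
  have hBn : ∀ (n : ℕ) (hl : n+2 < d),
      bvec d ti c c0 c1 (Fin.castSucc ⟨n+2, hl⟩) = c ⟨n+2, hl⟩ - c0 := by
    intro n hl
    simp only [bvec, Fin.coe_castSucc]
    rw [if_neg (by omega), if_neg (by omega), dif_pos hl]
  rcases j with ⟨jv, hj⟩
  rcases jv with _ | _ | n
  · have hsum : ∀ l : Fin d, bvec d ti c c0 c1 l.castSucc * pt d ti ⟨0, hj⟩ l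
        = if l = (⟨0, by omega⟩ : Fin d) then (c1-c0)*ti else 0 := by
      rintro ⟨lv, hl⟩
      rcases lv with _ | _ | n2
      · rw [if_pos (by simp [Fin.ext_iff]), hB0 hl]
        simp [pt]
      · rw [if_neg (by simp [Fin.ext_iff]), hB1 hl]
        ring
      · rw [if_neg (by simp [Fin.ext_iff]), hBn n2 hl]
        have : pt d ti ⟨0, hj⟩ ⟨n2+2, hl⟩ = 0 := by
          simp only [pt]
          rw [if_neg (by omega), if_neg (by omega), if_neg (by simp [Fin.ext_iff])]
        rw [this]; ring
    rw [Finset.sum_congr rfl (fun l _ => hsum l), Finset.sum_ite_eq']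
    have : (⟨0, hj⟩ : Fin d) = ⟨0, by omega⟩ := rfl
    rw [this]
    simp only [Finset.mem_univ, if_pos]
    ring
  · have hsum : ∀ l : Fin d, bvec d ti c c0 c1 l.castSucc * pt d ti ⟨1, hj⟩ l
        = if l = (⟨0, by omega⟩ : Fin d) then (c1-c0)*(ti+1) else 0 := by
      rintro ⟨lv, hl⟩
      rcases lv with _ | _ | n2
      · rw [if_pos (by simp [Fin.ext_iff]), hB0 hl]
        simp [pt]
      · rw [if_neg (by simp [Fin.ext_iff]), hB1 hl]
        ring
      · rw [if_neg (by simp [Fin.ext_iff]), hBn n2 hl]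
        have : pt d ti ⟨1, hj⟩ ⟨n2+2, hl⟩ = 0 := by
          simp only [pt]
          rw [if_neg (by omega), if_neg (by omega), if_neg (by simp [Fin.ext_iff])]
        rw [this]; ring
    rw [Finset.sum_congr rfl (fun l _ => hsum l), Finset.sum_ite_eq']
    have : (⟨1, hj⟩ : Fin d) = ⟨1, by omega⟩ := rfl
    rw [this]
    simp only [Finset.mem_univ, if_pos]
    ring
  · have hsum : ∀ l : Fin d, bvec d ti c c0 c1 l.castSucc * pt d ti ⟨n+2, hj⟩ l
        = (if l = (⟨0, by omega⟩ : Fin d) then (c1-c0)*ti else 0)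
          + (if l = (⟨n+2, hj⟩ : Fin d) then c ⟨n+2, hj⟩ - c0 else 0) := by
      rintro ⟨lv, hl⟩
      rcases lv with _ | _ | n2
      · rw [if_pos (by simp [Fin.ext_iff]), if_neg (by simp [Fin.ext_iff]), hB0 hl]
        simp [pt]
      · rw [if_neg (by simp [Fin.ext_iff]), if_neg (by simp [Fin.ext_iff]), hB1 hl]
        ring
      · rw [if_neg (by simp [Fin.ext_iff]), hBn n2 hl]
        have hp : pt d ti ⟨n+2, hj⟩ ⟨n2+2, hl⟩
            = if (⟨n2+2, hl⟩ : Fin d) = ⟨n+2, hj⟩ then 1 else 0 := by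
          simp only [pt]
          rw [if_neg (by omega), if_neg (by omega)]
        rw [hp]
        by_cases he : (⟨n2+2, hl⟩ : Fin d) = (⟨n+2, hj⟩ : Fin d)
        · rw [if_pos he, if_pos he, he]; ring
        · rw [if_neg he, if_neg he]; ring
    rw [Finset.sum_congr rfl (fun l _ => hsum l), Finset.sum_add_distrib,
      Finset.sum_ite_eq', Finset.sum_ite_eq']
    simp only [Finset.mem_univ, if_pos]
    ring

lemma argmaxFin_le {k : ℕ} [NeZero k] (f : Fin k → ℝ) (j : Fin k) : f j ≤ f (argmaxFin f) := by
  have h : argmaxFin f ∈ Finset.univ.filter fun i => ∀ j, f j ≤ f i := by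
    unfold argmaxFin
    exact Finset.min'_mem _ _
  exact (Finset.mem_filter.mp h).2 j

lemma argmaxFin_eq {k : ℕ} [NeZero k] (f : Fin k → ℝ) (i : Fin k)
    (h : ∀ j, j ≠ i → f j < f i) : argmaxFin f = i := by
  by_contra hne
  have h1 := h (argmaxFin f) hne
  have h2 := argmaxFin_le f i
  linarith

lemma pt_injective (d : ℕ) (hd : 2 ≤ d) (m : ℕ) :
    Function.Injective (fun q : Fin m × Fin d => pt d (4*(q.1:ℕ)) q.2) := by
  rintro ⟨i, j⟩ ⟨i', j'⟩ h
  simp only at h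
  have h0 := congrFun h ⟨0, by omega⟩
  have hp0 : ∀ (ti : ℝ) (jj : Fin d), pt d ti jj ⟨0, by omega⟩
      = ti + (if jj.val = 1 then 1 else 0) := by
    intro ti jj; simp [pt]
  rw [hp0, hp0] at h0
  have hii : i = i' ∧ ((j:ℕ) = 1 ↔ (j':ℕ) = 1) := by
    by_cases hj1 : (j:ℕ) = 1 <;> by_cases hj'1 : (j':ℕ) = 1 <;>
      simp only [hj1, hj'1, if_true, if_false, if_pos, if_neg] at h0 <;>
      [skip; skip; skip; skip] <;>
      first
      | (refine ⟨?_, by simp [hj1, hj'1]⟩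
         have : (i:ℕ) = (i':ℕ) := by exact_mod_cast (by push_cast at h0 ⊢; linarith : ((i:ℕ):ℝ) = ((i':ℕ):ℝ))
         exact Fin.ext this)
      | (exfalso
         have : (4*(i:ℕ)+1 : ℝ) = 4*(i':ℕ) ∨ (4*(i:ℕ) : ℝ) = 4*(i':ℕ)+1 := by
           push_cast at h0; first | (left; linarith) | (right; linarith)
         rcases this with hc | hc
         · have : 4*(i:ℕ)+1 = 4*(i':ℕ) := by exact_mod_cast hc
           omega
         · have : 4*(i:ℕ) = 4*(i':ℕ)+1 := by exact_mod_cast hc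
           omega)
  obtain ⟨rfl, hiff⟩ := hii
  refine Prod.ext rfl ?_
  simp only
  by_cases hj1 : (j:ℕ) = 1
  · exact Fin.ext (by rw [hj1, (hiff.mp hj1)])
  · have hj'1 : ¬ (j':ℕ) = 1 := fun hh => hj1 (hiff.mpr hh)
    by_contra hne
    by_cases hj2 : 2 ≤ (j:ℕ)
    · have hj := congrFun h j
      have hL : pt d (4*(i:ℕ)) j j = 1 := by
        simp only [pt]
        rw [if_neg (by omega), if_neg (by omega)]
        simp
      have hR : pt d (4*(i:ℕ)) j' j = 0 := by
        simp only [pt]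
        rw [if_neg (by omega), if_neg (by omega), if_neg hne]
      rw [hL, hR] at hj
      norm_num at hj
    · have hj0 : (j:ℕ) = 0 := by omega
      have hj'2 : 2 ≤ (j':ℕ) := by
        rcases Nat.lt_or_ge (j':ℕ) 2 with hh | hh
        · exfalso; exact hne (Fin.ext (by omega))
        · exact hh
      have hj := congrFun h j'
      have hL : pt d (4*(i:ℕ)) j j' = 0 := by
        simp only [pt]
        rw [if_neg (by omega), if_neg (by omega), if_neg (fun hh => hne hh.symm)]
      have hR : pt d (4*(i:ℕ)) j' j' = 1 := by
        simp only [pt]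
        rw [if_neg (by omega), if_neg (by omega)]
        simp
      rw [hL, hR] at hj
      norm_num at hj

lemma master (d m : ℕ) (hd : 2 ≤ d) (hm : 1 ≤ m) (σ : Fin m → Fin d → ℝ)
    (hσ : ∀ i j, σ i j = 1 ∨ σ i j = -1) :
    ∃ W : Fin (m+1) → Fin (d+1) → ℝ, ∀ (i : Fin m) (j : Fin d),
      argmaxFin (fun c => ∑ l, W c l * aug (pt d (4*(i:ℕ)) j) l)
        = (if σ i j = 1 then i.succ else 0) := by
  classical
  have hne : Nonempty (Fin m × Fin d) := ⟨(⟨0, hm⟩, ⟨0, by omega⟩)⟩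
  set B : Fin m → Fin (d+1) → ℝ :=
    fun i => bvec d (4*(i:ℕ)) (σ i) (σ i ⟨0, by omega⟩) (σ i ⟨1, by omega⟩) with hBdef
  have hB : ∀ (i : Fin m) (j : Fin d), score d (B i) (pt d (4*(i:ℕ)) j) = σ i j :=
    fun i j => bscore d hd (4*(i:ℕ)) (σ i) j
  set M : Fin m → ℝ := fun i =>
    (Finset.univ : Finset (Fin m × Fin d)).sup' Finset.univ_nonempty
      (fun q => |score d (B i) (pt d (4*(q.1:ℕ)) q.2)|) with hMdef
  have hMle : ∀ (i : Fin m) (q : Fin m × Fin d),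
      |score d (B i) (pt d (4*(q.1:ℕ)) q.2)| ≤ M i :=
    fun i q => Finset.le_sup'
      (fun q : Fin m × Fin d => |score d (B i) (pt d (4*(q.1:ℕ)) q.2)|) (Finset.mem_univ q)
  have hM0 : ∀ i, 0 ≤ M i := fun i =>
    le_trans (abs_nonneg _) (hMle i (⟨0, hm⟩, ⟨0, by omega⟩))
  set δ : Fin m → ℝ := fun i => 1/(1 + M i) with hδdef
  have hδpos : ∀ i, 0 < δ i := by
    intro i
    have := hM0 i
    simp only [hδdef]
    positivity
  have hδsmall : ∀ (i : Fin m) (q : Fin m × Fin d),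
      |δ i * score d (B i) (pt d (4*(q.1:ℕ)) q.2)| < 1 := by
    intro i q
    have h1 := hMle i q
    have h2 := hM0 i
    rw [abs_mul, abs_of_pos (hδpos i)]
    calc δ i * |score d (B i) (pt d (4*(q.1:ℕ)) q.2)| ≤ δ i * M i := by
          exact mul_le_mul_of_nonneg_left h1 (hδpos i).le
      _ < 1 := by
          simp only [hδdef]
          rw [div_mul_eq_mul_div, div_lt_one (by linarith)]
          linarith
  set W : Fin (m+1) → Fin (d+1) → ℝ :=
    fun c => Fin.cases (motive := fun _ => Fin (d+1) → ℝ) (fun _ => 0)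
      (fun i l => avec d (4*(i:ℕ)) l + δ i * B i l) c with hWdef
  refine ⟨W, ?_⟩
  intro i j
  have hs0 : ∀ x : Fin d → ℝ, score d (W 0) x = 0 := by
    intro x
    have : W 0 = fun _ => (0:ℝ) := rfl
    rw [this, score_zero]
  have hssucc : ∀ (I : Fin m) (x : Fin d → ℝ),
      score d (W I.succ) x = score d (avec d (4*(I:ℕ))) x + δ I * score d (B I) x := by
    intro I x
    have : W I.succ = fun l => avec d (4*(I:ℕ)) l + δ I * B I l := rfl
    rw [this, score_add_smul]
  have hown : score d (W i.succ) (pt d (4*(i:ℕ)) j) = δ i * σ i j := by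
    rw [hssucc, hB, ascore d hd]
    have : (4*((i:ℕ):ℝ) - 4*((i:ℕ):ℝ)) = 0 := by ring
    rw [this]
    by_cases hj : (j:ℕ) = 1 <;> simp [hj]
  have hcross : ∀ I : Fin m, I ≠ i → score d (W I.succ) (pt d (4*(i:ℕ)) j) < 0 := by
    intro I hI
    rw [hssucc]
    have ha : score d (avec d (4*(I:ℕ))) (pt d (4*(i:ℕ)) j) ≤ -8 := by
      rw [ascore d hd]
      set D : ℝ := 4*((I:ℕ):ℝ) - 4*((i:ℕ):ℝ) with hD
      have habs : 4 ≤ |D| := by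
        have hne' : (I:ℕ) ≠ (i:ℕ) := fun hh => hI (Fin.ext hh)
        rcases Nat.lt_or_ge (I:ℕ) (i:ℕ) with hh | hh
        · have h1 : ((I:ℕ):ℝ) + 1 ≤ ((i:ℕ):ℝ) := by exact_mod_cast hh
          have : D ≤ -4 := by rw [hD]; linarith
          rw [abs_of_nonpos (by linarith)]; linarith
        · have hh' : (i:ℕ) < (I:ℕ) := by omega
          have h1 : ((i:ℕ):ℝ) + 1 ≤ ((I:ℕ):ℝ) := by exact_mod_cast hh'
          have : 4 ≤ D := by rw [hD]; linarith
          rw [abs_of_nonneg (by linarith)]; linarith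
      have h4 : 4 ≤ D ∨ D ≤ -4 := by
        rcases le_abs.mp habs with h | h
        · left; exact h
        · right; linarith
      by_cases hj : (j:ℕ) = 1
      · rw [if_pos hj]
        rcases h4 with h | h
        · nlinarith [mul_nonneg (by linarith : (0:ℝ) ≤ D - 4) (by linarith : (0:ℝ) ≤ D + 2)]
        · nlinarith [sq_nonneg D]
      · rw [if_neg hj]
        rcases h4 with h | h
        · nlinarith
        · nlinarith
    have hb := hδsmall I (i, j)
    have hb' : δ I * score d (B I) (pt d (4*(i:ℕ)) j) < 1 :=
      lt_of_le_of_lt (le_abs_self _) hb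
    linarith
  rcases hσ i j with h1 | h1
  · rw [if_pos h1]
    apply argmaxFin_eq
    intro c hc
    have hval : score d (W i.succ) (pt d (4*(i:ℕ)) j) = δ i := by rw [hown, h1, mul_one]
    induction c using Fin.cases with
    | zero =>
        show score d (W 0) _ < score d (W i.succ) _
        rw [hs0, hval]; exact hδpos i
    | succ I =>
        have hIne : I ≠ i := fun hh => hc (by rw [hh])
        show score d (W I.succ) _ < score d (W i.succ) _
        rw [hval]
        exact lt_trans (hcross I hIne) (hδpos i)
  · rw [if_neg (by rw [h1]; norm_num)]
    apply argmaxFin_eq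
    intro c hc
    induction c using Fin.cases with
    | zero => exact absurd rfl hc
    | succ I =>
        show score d (W I.succ) _ < score d (W 0) _
        rw [hs0]
        by_cases hIe : I = i
        · subst hIe
          rw [hown, h1]
          have := hδpos I
          linarith
        · exact hcross I hIe

end AuxSVM


/-- For all integers d, k ≥ 2, the Natarajan dimension of the multiclass SVM
hypothesis class `L = msvm d k` of functions ℝ^d → [k] is at least d·(k−1), i.e. there is an
N-shattered set of cardinality at least d·(k−1). -/
theorem stmt0 (d k : ℕ) [NeZero k] (hd : 2 ≤ d) (hk : 2 ≤ k) :
    ∃ S : Finset (Fin d → ℝ), NShatters (msvm d k) ↑S ∧ d * (k - 1) ≤ S.card := by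
  classical
  obtain ⟨m, rfl⟩ := Nat.exists_eq_succ_of_ne_zero (by omega : k ≠ 0)
  have hm : 1 ≤ m := by omega
  set P : Fin m × Fin d → (Fin d → ℝ) := fun q => pt d (4*(q.1:ℕ)) q.2 with hP
  have hPinj : Function.Injective P := pt_injective d hd m
  refine ⟨Finset.image P Finset.univ, ?_, ?_⟩
  · set f₁ : (Fin d → ℝ) → Fin (m+1) := fun x =>
      if h : ∃ q : Fin m × Fin d, P q = x then (h.choose.1).succ else 0 with hf₁
    have hf₁eq : ∀ q : Fin m × Fin d, f₁ (P q) = q.1.succ := by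
      intro q
      have hex : ∃ q' : Fin m × Fin d, P q' = P q := ⟨q, rfl⟩
      simp only [hf₁]
      rw [dif_pos hex]
      rw [hPinj hex.choose_spec]
    refine ⟨f₁, fun _ => 0, ?_, ?_⟩
    · intro x hx
      rw [Finset.coe_image] at hx
      obtain ⟨q, -, rfl⟩ := hx
      rw [hf₁eq q]
      exact Fin.succ_ne_zero _
    · intro T hT
      set σ : Fin m → Fin d → ℝ := fun i j => if P (i, j) ∈ T then 1 else -1 with hσdef
      have hσ : ∀ i j, σ i j = 1 ∨ σ i j = -1 := by
        intro i j
        simp only [hσdef]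
        by_cases h : P (i, j) ∈ T
        · left; rw [if_pos h]
        · right; rw [if_neg h]
      obtain ⟨W, hW⟩ := master d m hd hm σ hσ
      refine ⟨fun x => argmaxFin (fun c => ∑ l, W c l * aug x l), ⟨W, rfl⟩, ?_, ?_⟩
      · intro x hx
        have hxS : x ∈ (↑(Finset.image P Finset.univ) : Set (Fin d → ℝ)) := hT hx
        rw [Finset.coe_image] at hxS
        obtain ⟨q, -, rfl⟩ := hxS
        rcases q with ⟨i, j⟩
        rw [hf₁eq (i, j)]
        have hσ1 : σ i j = 1 := by simp only [hσdef]; rw [if_pos hx]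
        show argmaxFin (fun c => ∑ l, W c l * aug (pt d (4*(i:ℕ)) j) l) = i.succ
        rw [hW i j, if_pos hσ1]
      · intro x hx
        obtain ⟨hxS, hxT⟩ := hx
        rw [Finset.coe_image] at hxS
        obtain ⟨q, -, rfl⟩ := hxS
        rcases q with ⟨i, j⟩
        have hσ1 : σ i j = -1 := by simp only [hσdef]; rw [if_neg hxT]
        show argmaxFin (fun c => ∑ l, W c l * aug (pt d (4*(i:ℕ)) j) l) = 0
        rw [hW i j, if_neg (by rw [hσ1]; norm_num)]
  · rw [Finset.card_image_of_injective _ hPinj]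
    simp only [Finset.card_univ, Fintype.card_prod, Fintype.card_fin]
    have : m + 1 - 1 = m := by omega
    rw [this]
    exact (Nat.mul_comm d m).le
end

section
/- There exists a universal constant C > 0 such that for all integers d, k ≥ 2, the graph dimension of the multiclass SVM hypothesis class L = {h_W : W ∈ ℝ^{k×(d+1)}} of functions ℝ^d → [k] satisfies d_G(L) ≤ C·d·k·log(d·k). -/
open MeasureTheory
open scoped ENNReal

section AuxProof

open Module Set

lemma segment_lemma {V : Type} [AddCommGroup V] [Module ℝ V] {N : ℕ}
    (ℓ : Fin (N + 1) → (V →ₗ[ℝ] ℝ)) (v w : V)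
    (h : ∀ i : Fin N, decide (0 ≤ ℓ i.castSucc v) = decide (0 ≤ ℓ i.castSucc w))
    (hv : 0 ≤ ℓ (Fin.last N) v) (hw : ℓ (Fin.last N) w < 0) :
    ∃ u : V, ℓ (Fin.last N) u = 0 ∧
      ∀ i : Fin N, decide (0 ≤ ℓ i.castSucc u) = decide (0 ≤ ℓ i.castSucc v) := by
  have hab : 0 < ℓ (Fin.last N) v - ℓ (Fin.last N) w := by linarith
  set t : ℝ := ℓ (Fin.last N) v / (ℓ (Fin.last N) v - ℓ (Fin.last N) w) with ht
  have ht0 : 0 ≤ t := div_nonneg hv hab.le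
  have ht1 : t ≤ 1 := by rw [ht, div_le_one hab]; linarith
  have keyf : ∀ j : Fin (N + 1), ℓ j (v + t • (w - v)) = (1 - t) * ℓ j v + t * ℓ j w := by
    intro j; simp only [map_add, LinearMap.map_smul, map_sub, smul_eq_mul]; ring
  refine ⟨v + t • (w - v), ?_, ?_⟩
  · rw [keyf]
    rw [ht]
    field_simp
    ring
  · intro i
    rw [decide_eq_decide, keyf i.castSucc]
    by_cases hc : 0 ≤ ℓ i.castSucc v
    · have he : 0 ≤ ℓ i.castSucc w := by
        have := h i; rw [decide_eq_true hc] at this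
        exact of_decide_eq_true this.symm
      have h1t : 0 ≤ 1 - t := by linarith
      constructor
      · intro _; exact hc
      · intro _; positivity
    · have he : ¬ 0 ≤ ℓ i.castSucc w := by
        have := h i
        rw [decide_eq_false hc] at this
        intro h0
        rw [decide_eq_true h0] at this
        exact absurd this.symm (by simp)
      push_neg at hc he
      constructor
      · intro h0
        exfalso
        have hA : (1 - t) * ℓ i.castSucc v ≤ 0 :=
          mul_nonpos_of_nonneg_of_nonpos (by linarith) hc.le
        have hB : t * ℓ i.castSucc w ≤ 0 :=
          mul_nonpos_of_nonneg_of_nonpos ht0 he.le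
        have h1 : (1 - t) * ℓ i.castSucc v = 0 := by linarith
        have h2 : t * ℓ i.castSucc w = 0 := by linarith
        rcases mul_eq_zero.mp h1 with h3 | h3
        · rcases mul_eq_zero.mp h2 with h4 | h4 <;> linarith
        · linarith
      · intro h0; linarith

lemma pascal_sum (N n : ℕ) :
    ∑ i ∈ Finset.range (n + 1), (N + 1).choose i
      = ∑ i ∈ Finset.range (n + 1), N.choose i + ∑ i ∈ Finset.range n, N.choose i := by
  rw [Finset.sum_range_succ' (fun i => (N + 1).choose i) n,
    Finset.sum_range_succ' (fun i => N.choose i) n]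
  simp only [Nat.choose_succ_succ, Finset.sum_add_distrib, Nat.choose_zero_right, Nat.succ_eq_add_one]
  omega

lemma sign_patterns : ∀ (N n : ℕ) (V : Type) [AddCommGroup V] [Module ℝ V]
    [FiniteDimensional ℝ V], finrank ℝ V ≤ n → ∀ ℓ : Fin N → (V →ₗ[ℝ] ℝ),
    (Set.range (fun v (i : Fin N) => decide (0 ≤ ℓ i v))).ncard
      ≤ ∑ i ∈ Finset.range (n + 1), N.choose i := by
  intro N
  induction N with
  | zero =>
    intro n V _ _ _ _ ℓ
    have h1 : (Set.range (fun v (i : Fin 0) => decide (0 ≤ ℓ i v))).ncard ≤ 1 := by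
      have hsub : Set.range (fun v (i : Fin 0) => decide (0 ≤ ℓ i v))
          ⊆ {fun i : Fin 0 => i.elim0} := by
        rintro σ ⟨v, rfl⟩
        simp only [Set.mem_singleton_iff]
        funext i
        exact i.elim0
      calc (Set.range (fun v (i : Fin 0) => decide (0 ≤ ℓ i v))).ncard
          ≤ ({fun i : Fin 0 => i.elim0} : Set (Fin 0 → Bool)).ncard :=
            Set.ncard_le_ncard hsub (Set.finite_singleton _)
        _ = 1 := Set.ncard_singleton _
    refine h1.trans ?_
    calc (1 : ℕ) = Nat.choose 0 0 := rfl
      _ ≤ ∑ i ∈ Finset.range (n + 1), Nat.choose 0 i :=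
          Finset.single_le_sum (fun _ _ => Nat.zero_le _) (Finset.mem_range.mpr (by omega))
  | succ N IH =>
    intro n V _ _ _ hrank ℓ
    set g : V → (Fin (N + 1) → Bool) := fun v i => decide (0 ≤ ℓ i v) with hg
    set g' : V → (Fin N → Bool) := fun v i => decide (0 ≤ ℓ i.castSucc v) with hg'
    set φ : (Fin (N + 1) → Bool) → (Fin N → Bool) := fun σ i => σ i.castSucc with hφ
    have hφg : ∀ v, φ (g v) = g' v := fun v => rfl
    have hfin : ∀ (s : Set (Fin N → Bool)), s.Finite := fun s => s.toFinite
    have hfin' : ∀ (s : Set (Fin (N + 1) → Bool)), s.Finite := fun s => s.toFinite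
    by_cases hz : ℓ (Fin.last N) = 0
    · have hinj : Set.InjOn φ (Set.range g) := by
        rintro σ ⟨v, rfl⟩ τ ⟨w, rfl⟩ hst
        funext i
        refine Fin.lastCases ?_ ?_ i
        · show g v (Fin.last N) = g w (Fin.last N)
          simp only [hg, hz]
          rfl
        · intro j
          show g v j.castSucc = g w j.castSucc
          exact congrFun hst j
      have hle : (Set.range g).ncard ≤ (Set.range g').ncard := by
        rw [← Set.ncard_image_of_injOn hinj]
        apply Set.ncard_le_ncard _ (hfin _)
        rintro τ ⟨σ, ⟨v, rfl⟩, rfl⟩; exact ⟨v, rfl⟩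
      refine hle.trans ((IH n V hrank (fun i => ℓ i.castSucc)).trans ?_)
      apply Finset.sum_le_sum; intro i _
      exact Nat.choose_le_choose i (Nat.le_succ N)
    · -- kernel case
      set K := LinearMap.ker (ℓ (Fin.last N)) with hK
      have hKlt : finrank ℝ K < finrank ℝ V := by
        apply Submodule.finrank_lt
        intro htop
        exact hz (LinearMap.ker_eq_top.mp htop)
      have hn1 : 1 ≤ n := by omega
      have hKn : finrank ℝ K ≤ n - 1 := by omega
      set ℓ'' : Fin N → (K →ₗ[ℝ] ℝ) := fun i => (ℓ i.castSucc).comp K.subtype with hℓ''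
      set g'' : K → (Fin N → Bool) := fun u i => decide (0 ≤ ℓ'' i u) with hg''
      have hA'' : (Set.range g'').ncard ≤ ∑ i ∈ Finset.range (n - 1 + 1), N.choose i :=
        IH (n - 1) K hKn ℓ''
      set At : Set (Fin (N + 1) → Bool) := Set.range g ∩ {σ | σ (Fin.last N) = true} with hAt
      set Af : Set (Fin (N + 1) → Bool) := Set.range g ∩ {σ | σ (Fin.last N) = false} with hAf
      have hsplit : Set.range g = At ∪ Af := by
        ext σ; constructor
        · intro hσ
          cases hb : σ (Fin.last N)
          · exact Or.inr ⟨hσ, hb⟩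
          · exact Or.inl ⟨hσ, hb⟩
        · rintro (⟨h1, -⟩ | ⟨h1, -⟩) <;> exact h1
      have hdisj : Disjoint At Af := by
        rw [Set.disjoint_left]
        rintro σ ⟨-, h1⟩ ⟨-, h2⟩
        simp only [Set.mem_setOf_eq] at h1 h2
        rw [h1] at h2; exact Bool.noConfusion h2
      have hinjt : Set.InjOn φ At := by
        rintro σ ⟨-, h1⟩ τ ⟨-, h2⟩ hst
        funext i
        refine Fin.lastCases ?_ ?_ i
        · simp only [Set.mem_setOf_eq] at h1 h2; rw [h1, h2]
        · intro j; exact congrFun hst j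
      have hinjf : Set.InjOn φ Af := by
        rintro σ ⟨-, h1⟩ τ ⟨-, h2⟩ hst
        funext i
        refine Fin.lastCases ?_ ?_ i
        · simp only [Set.mem_setOf_eq] at h1 h2; rw [h1, h2]
        · intro j; exact congrFun hst j
      have hsub : φ '' At ∪ φ '' Af ⊆ Set.range g' := by
        rintro τ (⟨σ, ⟨⟨v, rfl⟩, -⟩, rfl⟩ | ⟨σ, ⟨⟨v, rfl⟩, -⟩, rfl⟩) <;> exact ⟨v, rfl⟩
      have hint : φ '' At ∩ φ '' Af ⊆ Set.range g'' := by
        rintro τ ⟨⟨σ, ⟨⟨v, rfl⟩, hv⟩, rfl⟩, ⟨ρ, ⟨⟨w, rfl⟩, hw⟩, hρ⟩⟩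
        simp only [Set.mem_setOf_eq, hg] at hv hw
        have hv' : 0 ≤ ℓ (Fin.last N) v := of_decide_eq_true hv
        have hw' : ℓ (Fin.last N) w < 0 := by
          have := of_decide_eq_false hw
          exact lt_of_not_ge this
        have hvw : ∀ i : Fin N, decide (0 ≤ ℓ i.castSucc v) = decide (0 ≤ ℓ i.castSucc w) := by
          intro i
          have := congrFun hρ i
          exact this.symm
        obtain ⟨u, hu0, hu⟩ := segment_lemma ℓ v w hvw hv' hw'
        refine ⟨⟨u, hu0⟩, ?_⟩
        funext i
        exact (hu i).trans rfl
      calc (Set.range g).ncard = At.ncard + Af.ncard := by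
            rw [hsplit, Set.ncard_union_eq hdisj (hfin' _) (hfin' _)]
        _ = (φ '' At).ncard + (φ '' Af).ncard := by
            rw [Set.ncard_image_of_injOn hinjt, Set.ncard_image_of_injOn hinjf]
        _ = (φ '' At ∪ φ '' Af).ncard + (φ '' At ∩ φ '' Af).ncard := by
            rw [Set.ncard_union_add_ncard_inter _ _ (hfin _) (hfin _)]
        _ ≤ (Set.range g').ncard + (Set.range g'').ncard :=
            add_le_add (Set.ncard_le_ncard hsub (hfin _)) (Set.ncard_le_ncard hint (hfin _))
        _ ≤ ∑ i ∈ Finset.range (n + 1), N.choose i + ∑ i ∈ Finset.range n, N.choose i := by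
            refine add_le_add (IH n V hrank (fun i => ℓ i.castSucc)) ?_
            have : n - 1 + 1 = n := by omega
            rw [this] at hA''
            exact hA''
        _ = ∑ i ∈ Finset.range (n + 1), (N + 1).choose i := (pascal_sum N n).symm

lemma argmaxFin_congr {k : ℕ} [NeZero k] (f g : Fin k → ℝ)
    (h : ∀ i j, (f j ≤ f i ↔ g j ≤ g i)) : argmaxFin f = argmaxFin g := by
  unfold argmaxFin
  have hset : (Finset.univ.filter fun i => ∀ j, f j ≤ f i)
      = (Finset.univ.filter fun i => ∀ j, g j ≤ g i) := by
    apply Finset.filter_congr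
    intro i _
    exact forall_congr' fun j => h i j
  congr 1

def evalL (d k : ℕ) (x : Fin d → ℝ) (i j : Fin k) :
    ((Fin k → Fin (d + 1) → ℝ) →ₗ[ℝ] ℝ) where
  toFun := fun W => ∑ t, (W i t - W j t) * aug x t
  map_add' := by
    intro W W'
    simp only [Pi.add_apply]
    rw [← Finset.sum_add_distrib]
    apply Finset.sum_congr rfl
    intros; ring
  map_smul' := by
    intro c W
    simp only [Pi.smul_apply, smul_eq_mul, RingHom.id_apply]
    rw [Finset.mul_sum]
    apply Finset.sum_congr rfl
    intros; ring

lemma sign_patterns_index (ι : Type) [Fintype ι] (n : ℕ) (V : Type) [AddCommGroup V]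
    [Module ℝ V] [FiniteDimensional ℝ V] (hrank : finrank ℝ V ≤ n)
    (ℓ : ι → (V →ₗ[ℝ] ℝ)) :
    (Set.range (fun v (i : ι) => decide (0 ≤ ℓ i v))).ncard
      ≤ ∑ i ∈ Finset.range (n + 1), (Fintype.card ι).choose i := by
  set e := Fintype.equivFin ι with he
  have h0 := sign_patterns (Fintype.card ι) n V hrank (fun j => ℓ (e.symm j))
  set ψ : (Fin (Fintype.card ι) → Bool) → (ι → Bool) := fun σ i => σ (e i) with hψ
  have hψinj : Function.Injective ψ := by
    intro σ τ hst
    funext j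
    have := congrFun hst (e.symm j)
    simpa [hψ] using this
  have him : Set.range (fun v (i : ι) => decide (0 ≤ ℓ i v))
      = ψ '' Set.range (fun v (j : Fin (Fintype.card ι)) => decide (0 ≤ ℓ (e.symm j) v)) := by
    ext σ
    constructor
    · rintro ⟨v, rfl⟩
      exact ⟨_, ⟨v, rfl⟩, by funext i; simp [hψ]⟩
    · rintro ⟨τ, ⟨v, rfl⟩, rfl⟩
      exact ⟨v, by funext i; simp [hψ]⟩
  rw [him, Set.ncard_image_of_injective _ hψinj]
  exact h0

noncomputable def restrictW (d k : ℕ) [NeZero k] (S : Finset (Fin d → ℝ))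
    (W : Fin k → Fin (d + 1) → ℝ) : {x // x ∈ S} → Fin k :=
  fun x => argmaxFin (fun i => ∑ j, W i j * aug x.1 j)

lemma restrict_card_le (d k : ℕ) [NeZero k] (S : Finset (Fin d → ℝ)) :
    (Set.range (restrictW d k S)).ncard
      ≤ ∑ i ∈ Finset.range (k * (d + 1) + 1), (S.card * (k * k)).choose i := by
  classical
  set ι := ({x // x ∈ S} × (Fin k × Fin k)) with hι
  set ℓ : ι → ((Fin k → Fin (d + 1) → ℝ) →ₗ[ℝ] ℝ) :=
    fun p => evalL d k p.1.1 p.2.1 p.2.2 with hℓ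
  set P : (Fin k → Fin (d + 1) → ℝ) → (ι → Bool) :=
    fun W p => decide (0 ≤ ℓ p W) with hP
  have hrank : finrank ℝ (Fin k → Fin (d + 1) → ℝ) ≤ k * (d + 1) := by
    rw [Module.finrank_pi_fintype ℝ]
    simp [Module.finrank_pi]
  have hcard : Fintype.card ι = S.card * (k * k) := by
    simp [hι, Fintype.card_coe]
  have key : ∀ W W', P W = P W' → restrictW d k S W = restrictW d k S W' := by
    intro W W' h
    funext x
    apply argmaxFin_congr
    intro i j
    have e1 : ∀ (U : Fin k → Fin (d + 1) → ℝ),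
        ((∑ t, U j t * aug x.1 t ≤ ∑ t, U i t * aug x.1 t) ↔ 0 ≤ ℓ (x, (i, j)) U) := by
      intro U
      rw [← sub_nonneg]
      have : ℓ (x, (i, j)) U = ∑ t, U i t * aug x.1 t - ∑ t, U j t * aug x.1 t := by
        show (∑ t, (U i t - U j t) * aug x.1 t) = _
        rw [← Finset.sum_sub_distrib]
        apply Finset.sum_congr rfl
        intros; ring
      rw [this]
    rw [e1 W, e1 W']
    have := congrFun h (x, (i, j))
    exact decide_eq_decide.mp this
  have hsub : Set.range (restrictW d k S)
      ⊆ (fun σ => if h : ∃ W, P W = σ then restrictW d k S h.choose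
          else restrictW d k S 0) '' Set.range P := by
    rintro _ ⟨W, rfl⟩
    refine ⟨P W, ⟨W, rfl⟩, ?_⟩
    show (if h : ∃ W', P W' = P W then restrictW d k S h.choose
        else restrictW d k S 0) = restrictW d k S W
    rw [dif_pos (⟨W, rfl⟩ : ∃ W', P W' = P W)]
    exact key _ _ (Exists.choose_spec (⟨W, rfl⟩ : ∃ W', P W' = P W))
  calc (Set.range (restrictW d k S)).ncard
      ≤ ((fun σ => if h : ∃ W, P W = σ then restrictW d k S h.choose
          else restrictW d k S 0) '' Set.range P).ncard := by
        apply Set.ncard_le_ncard hsub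
    _ ≤ (Set.range P).ncard := Set.ncard_image_le (Set.range P).toFinite
    _ ≤ ∑ i ∈ Finset.range (k * (d + 1) + 1), (Fintype.card ι).choose i :=
        sign_patterns_index ι (k * (d + 1)) _ hrank ℓ
    _ = ∑ i ∈ Finset.range (k * (d + 1) + 1), (S.card * (k * k)).choose i := by rw [hcard]

lemma two_pow_le_restrict (d k : ℕ) [NeZero k] (S : Finset (Fin d → ℝ))
    (hGS : GShatters (msvm d k) ↑S) :
    2 ^ S.card ≤ (Set.range (restrictW d k S)).ncard := by
  classical
  obtain ⟨f, hf⟩ := hGS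
  have hchoice : ∀ T ∈ S.powerset, ∃ g ∈ msvm d k,
      (∀ x ∈ (↑T : Set (Fin d → ℝ)), g x = f x) ∧
      ∀ x ∈ (↑S : Set (Fin d → ℝ)) \ ↑T, g x ≠ f x := by
    intro T hT
    exact hf ↑T (Finset.coe_subset.mpr (Finset.mem_powerset.mp hT))
  choose g hg1 hg2 hg3 using hchoice
  set i0 : Fin k := ⟨0, Nat.pos_of_ne_zero (NeZero.ne k)⟩ with hi0
  set F : Finset (Fin d → ℝ) → ({x // x ∈ S} → Fin k) :=
    fun T => if hT : T ∈ S.powerset then (fun x => g T hT x.1) else (fun _ => i0) with hF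
  have hmem : ∀ T ∈ S.powerset, F T ∈ (Set.range (restrictW d k S)).toFinite.toFinset := by
    intro T hT
    rw [Set.Finite.mem_toFinset]
    obtain ⟨W, hW⟩ := hg1 T hT
    refine ⟨W, ?_⟩
    funext x
    rw [hF]
    simp only [dif_pos hT]
    rw [hW]
    rfl
  have hinj : Set.InjOn F ↑S.powerset := by
    intro T₁ hT₁' T₂ hT₂' hFT
    rw [Finset.mem_coe] at hT₁' hT₂'
    rw [hF] at hFT
    simp only [dif_pos hT₁', dif_pos hT₂'] at hFT
    have hkey : ∀ (T₁ T₂ : Finset (Fin d → ℝ)) (h₁ : T₁ ∈ S.powerset) (h₂ : T₂ ∈ S.powerset),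
        ((fun x : {x // x ∈ S} => g T₁ h₁ x.1) = fun x => g T₂ h₂ x.1) →
        ∀ x, x ∈ T₁ → x ∈ T₂ := by
      intro T₁ T₂ h₁ h₂ heq x hx
      have hxS : x ∈ S := Finset.mem_powerset.mp h₁ hx
      by_contra hx2
      have e1 : g T₁ h₁ x = f x := hg2 T₁ h₁ x (by exact_mod_cast hx)
      have e2 : g T₂ h₂ x ≠ f x := hg3 T₂ h₂ x ⟨by exact_mod_cast hxS, by exact_mod_cast hx2⟩
      have := congrFun heq ⟨x, hxS⟩
      simp only at this
      rw [this] at e1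
      exact e2 e1
    ext x
    exact ⟨fun h => hkey T₁ T₂ hT₁' hT₂' hFT x h, fun h => hkey T₂ T₁ hT₂' hT₁' hFT.symm x h⟩
  calc 2 ^ S.card = S.powerset.card := (Finset.card_powerset S).symm
    _ ≤ (Set.range (restrictW d k S)).toFinite.toFinset.card :=
        Finset.card_le_card_of_injOn F hmem hinj
    _ = (Set.range (restrictW d k S)).ncard :=
        (Set.ncard_eq_toFinset_card _ _).symm

lemma geom_sum_le_pow (N n : ℕ) : ∑ i ∈ Finset.range (n + 1), N ^ i ≤ (N + 1) ^ n := by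
  induction n with
  | zero => simp
  | succ n ih =>
    rw [Finset.sum_range_succ' (fun i => N ^ i) (n + 1)]
    have h1 : ∑ i ∈ Finset.range (n + 1), N ^ (i + 1) = N * ∑ i ∈ Finset.range (n + 1), N ^ i := by
      rw [Finset.mul_sum]
      apply Finset.sum_congr rfl
      intros; ring
    rw [h1]
    have h2 : 1 ≤ (N + 1) ^ n := Nat.one_le_pow _ _ (Nat.succ_pos N)
    calc N * (∑ i ∈ Finset.range (n + 1), N ^ i) + N ^ 0
        ≤ N * (N + 1) ^ n + 1 := by
          simp only [pow_zero]
          exact Nat.add_le_add_right (Nat.mul_le_mul_left N ih) 1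
      _ ≤ N * (N + 1) ^ n + (N + 1) ^ n := Nat.add_le_add_left h2 _
      _ = (N + 1) ^ (n + 1) := by ring
    
lemma sum_choose_le_pow (N n : ℕ) :
    ∑ i ∈ Finset.range (n + 1), N.choose i ≤ (N + 1) ^ n :=
  (Finset.sum_le_sum fun i _ => Nat.choose_le_pow N i).trans (geom_sum_le_pow N n)

set_option maxHeartbeats 1000000 in
lemma real_arith (M D K nR : ℝ) (hM1 : 1 ≤ M) (hD : 2 ≤ D) (hK : 2 ≤ K)
    (hnR : 1 ≤ nR) (hn2DK : nR ≤ 2 * D * K)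
    (hlogineq : M * Real.log 2 ≤ nR * Real.log (M * K ^ 2 + 1)) :
    M ≤ 100 * D * K * Real.log (D * K) := by
  have hK2 : (4:ℝ) ≤ K ^ 2 := by nlinarith [sq_nonneg (K - 2)]
  have hDK4 : (4:ℝ) ≤ D * K := by nlinarith [sq_nonneg (D - K)]
  have hlog2 : (0.6931471803 : ℝ) < Real.log 2 := Real.log_two_gt_d9
  have hlog2' : Real.log 2 < 0.6931471808 := Real.log_two_lt_d9
  have hlogdk : 1 ≤ Real.log (D * K) := by
    have h4 : Real.log 4 ≤ Real.log (D * K) := Real.log_le_log (by norm_num) hDK4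
    have h4' : Real.log 4 = 2 * Real.log 2 := by
      rw [show (4:ℝ) = 2 ^ (2:ℕ) by norm_num, Real.log_pow]; push_cast; ring
    linarith
  set L := Real.log 2 with hL
  clear_value L
  have hLpos : 0 < L := by linarith
  have hKpos : (0:ℝ) < K := by linarith
  have hnRpos : (0:ℝ) < nR := by linarith
  have hden : (0:ℝ) < 2 * nR * K ^ 2 := by
    apply mul_pos (mul_pos two_pos hnRpos)
    positivity
  have hx : (0:ℝ) < M * K ^ 2 + 1 := by nlinarith
  set ε := L / (2 * nR * K ^ 2) with hε
  clear_value ε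
  have hεpos : 0 < ε := by rw [hε]; exact div_pos hLpos hden
  have hεx : Real.log (M * K ^ 2 + 1) ≤ ε * (M * K ^ 2 + 1) - 1 - Real.log ε := by
    have h3 := Real.log_le_sub_one_of_pos (mul_pos hεpos hx)
    rw [Real.log_mul hεpos.ne' hx.ne'] at h3
    linarith
  set A := 2 * nR * K ^ 2 / L with hA
  clear_value A
  have hApos : 0 < A := by rw [hA]; exact div_pos hden hLpos
  have hlogε : Real.log ε = - Real.log A := by
    rw [← Real.log_inv]
    congr 1
    rw [hA, hε, inv_div]
  have e1 : nR * (ε * (M * K ^ 2 + 1) - 1 - Real.log ε)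
      = (L / 2) * M + L / (2 * K ^ 2) - nR + nR * Real.log A := by
    rw [hlogε, hε]
    field_simp
    ring
  have hL8 : L / (2 * K ^ 2) ≤ 1 := by
    rw [div_le_one (by positivity)]
    nlinarith
  have step : (L / 2) * M ≤ 1 + nR * Real.log A := by
    have chain : M * L ≤ (L / 2) * M + L / (2 * K ^ 2) - nR + nR * Real.log A := by
      calc M * L ≤ nR * Real.log (M * K ^ 2 + 1) := hlogineq
        _ ≤ nR * (ε * (M * K ^ 2 + 1) - 1 - Real.log ε) :=
            mul_le_mul_of_nonneg_left hεx hnRpos.le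
        _ = _ := e1
    linarith [chain, hL8, hnR]
  have hA5 : A ≤ (D * K) ^ (5:ℕ) := by
    rw [hA, div_le_iff₀ hLpos]
    have hmul := mul_le_mul_of_nonneg_right hn2DK (sq_nonneg K)
    have h1 : 2 * nR * K ^ 2 ≤ 4 * D * K ^ 3 := by linarith [hmul]
    have hD4 : (16:ℝ) ≤ D ^ 4 := by
      nlinarith [sq_nonneg (D - 2), sq_nonneg (D + 2), sq_nonneg (D ^ 2 - 4)]
    have hcomb : (64:ℝ) ≤ D ^ 4 * K ^ 2 := by
      calc (64:ℝ) = 16 * 4 := by norm_num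
        _ ≤ D ^ 4 * K ^ 2 := mul_le_mul hD4 hK2 (by norm_num) (by positivity)
    have hDK3pos : (0:ℝ) < D * K ^ 3 := by positivity
    have h64 : 64 * (D * K ^ 3) ≤ (D ^ 4 * K ^ 2) * (D * K ^ 3) :=
      mul_le_mul_of_nonneg_right hcomb hDK3pos.le
    have hring : (D * K) ^ (5:ℕ) = (D ^ 4 * K ^ 2) * (D * K ^ 3) := by ring
    have h2 : 8 * (D * K ^ 3) ≤ (D * K) ^ (5:ℕ) := by
      rw [hring]; linarith [h64, hDK3pos]
    have hP5 : (0:ℝ) ≤ (D * K) ^ (5:ℕ) := by positivity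
    have h3 := mul_nonneg hP5 (by linarith : (0:ℝ) ≤ L - 1/2)
    nlinarith [h1, h2, h3]
  have hlogA : Real.log A ≤ 5 * Real.log (D * K) := by
    have := Real.log_le_log hApos hA5
    rwa [Real.log_pow, Nat.cast_ofNat] at this
  have hX : (1:ℝ) ≤ nR * Real.log (D * K) := by
    calc (1:ℝ) = 1 * 1 := by norm_num
      _ ≤ nR * Real.log (D * K) := mul_le_mul hnR hlogdk (by norm_num) (by linarith)
  have h2 : nR * Real.log A ≤ nR * (5 * Real.log (D * K)) :=
    mul_le_mul_of_nonneg_left hlogA hnRpos.le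
  have step2 : (L / 2) * M ≤ 6 * (nR * Real.log (D * K)) := by nlinarith [step, hX, h2]
  have hLM : 0.34 * M ≤ (L / 2) * M := mul_le_mul_of_nonneg_right (by linarith) (by linarith)
  have step3 : M ≤ 24 * (nR * Real.log (D * K)) := by linarith [step2, hLM, hX]
  have step4 : nR * Real.log (D * K) ≤ 2 * D * K * Real.log (D * K) :=
    mul_le_mul_of_nonneg_right hn2DK (by linarith)
  have hDKL : (0:ℝ) ≤ D * K * Real.log (D * K) :=
    mul_nonneg (mul_nonneg (by linarith) (by linarith)) (by linarith)
  linarith [step3, step4, hDKL]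

lemma final_arith (m d k : ℕ) (hd : 2 ≤ d) (hk : 2 ≤ k)
    (h : 2 ^ m ≤ (m * (k * k) + 1) ^ (k * (d + 1))) :
    (m : ℝ) ≤ 100 * d * k * Real.log (d * k) := by
  have hD : (2:ℝ) ≤ (d:ℝ) := by exact_mod_cast hd
  have hK : (2:ℝ) ≤ (k:ℝ) := by exact_mod_cast hk
  rcases Nat.eq_zero_or_pos m with hm | hm
  · rw [hm]
    push_cast
    have hlogdk : 0 ≤ Real.log ((d:ℝ) * k) := by
      apply Real.log_nonneg
      nlinarith
    have : (0:ℝ) ≤ 100 * (d:ℝ) * k * Real.log ((d:ℝ) * k) := by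
      apply mul_nonneg _ hlogdk
      positivity
    linarith
  have hM1 : (1:ℝ) ≤ (m:ℝ) := by exact_mod_cast hm
  have hnR : (1:ℝ) ≤ ((k * (d + 1) : ℕ) : ℝ) := by
    have : 1 ≤ k * (d + 1) := Nat.one_le_iff_ne_zero.mpr (by positivity)
    exact_mod_cast this
  have hn2DK : ((k * (d + 1) : ℕ) : ℝ) ≤ 2 * (d:ℝ) * k := by
    push_cast
    nlinarith
  have hpow : (2:ℝ) ^ m ≤ ((m:ℝ) * (k:ℝ) ^ 2 + 1) ^ (k * (d + 1)) := by
    have hcast : ((m * (k * k) + 1 : ℕ) : ℝ) = (m:ℝ) * (k:ℝ) ^ 2 + 1 := by push_cast; ring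
    calc (2:ℝ) ^ m = ((2 ^ m : ℕ) : ℝ) := by push_cast; ring
      _ ≤ (((m * (k * k) + 1) ^ (k * (d + 1)) : ℕ) : ℝ) := by exact_mod_cast h
      _ = ((m:ℝ) * (k:ℝ) ^ 2 + 1) ^ (k * (d + 1)) := by rw [Nat.cast_pow, hcast]
  have hlogineq : (m:ℝ) * Real.log 2
      ≤ ((k * (d + 1) : ℕ) : ℝ) * Real.log ((m:ℝ) * (k:ℝ) ^ 2 + 1) := by
    have h2 := Real.log_le_log (by positivity) hpow
    rwa [Real.log_pow, Real.log_pow] at h2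
  exact real_arith (m:ℝ) (d:ℝ) (k:ℝ) ((k * (d + 1) : ℕ) : ℝ) hM1 hD hK hnR hn2DK hlogineq

end AuxProof

/-- There is a universal constant C > 0 such that for all integers d, k ≥ 2, the
graph dimension of the multiclass SVM class satisfies d_G(L) ≤ C·d·k·log(d·k): every
G-shattered set has cardinality at most C·d·k·log(d·k). -/
theorem stmt1 : ∃ C : ℝ, 0 < C ∧ ∀ (d k : ℕ) [NeZero k], 2 ≤ d → 2 ≤ k →
    ∀ S : Finset (Fin d → ℝ), GShatters (msvm d k) ↑S →
      (S.card : ℝ) ≤ C * d * k * Real.log (d * k) := by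
  refine ⟨100, by norm_num, ?_⟩
  intro d k _ hd hk S hGS
  have h1 := two_pow_le_restrict d k S hGS
  have h2 := restrict_card_le d k S
  have h3 := sum_choose_le_pow (S.card * (k * k)) (k * (d + 1))
  exact final_arith S.card d k hd hk (h1.trans (h2.trans h3))
end

section
/- There exists a universal constant C > 0 such that for all integers d, k ≥ 2, every set X, and every binary hypothesis class H ⊆ {±1}^X of VC dimension at most d+1, the graph dimension of H_trees (the union over all trees T for k classes of the tree classifier classes H_T) is at most C·d·k·log(d·k); in particular d_G(H_T) ≤ C·d·k·log(d·k) for every tree T for k classes. -/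
open MeasureTheory
open scoped ENNReal

namespace Stmt2Aux

def internals {k : ℕ} : LTree k → ℕ
  | .leaf _ => 0
  | .node l r => internals l + internals r + 1

lemma labels_length {k : ℕ} (T : LTree k) : T.labels.length = internals T + 1 := by
  induction T with
  | leaf i => simp [LTree.labels, internals]
  | node l r ihl ihr => simp [LTree.labels, internals, ihl, ihr]; omega

def enc {k : ℕ} : LTree k → List (Option (Fin k))
  | .leaf i => [some i]
  | .node l r => none :: (enc l ++ enc r)

lemma enc_length {k : ℕ} (T : LTree k) : (enc T).length = 2 * internals T + 1 := by
  induction T with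
  | leaf i => simp [enc, internals]
  | node l r ihl ihr => simp [enc, internals, ihl, ihr]; omega

lemma enc_prefix {k : ℕ} : ∀ (T₁ T₂ : LTree k) (s₁ s₂ : List (Option (Fin k))),
    enc T₁ ++ s₁ = enc T₂ ++ s₂ → T₁ = T₂ ∧ s₁ = s₂
  | .leaf i, .leaf j, s₁, s₂, h => by
      simp only [enc, List.cons_append, List.nil_append, List.cons.injEq, Option.some.injEq] at h
      exact ⟨by rw [h.1], h.2⟩
  | .leaf i, .node l r, s₁, s₂, h => by simp [enc] at h
  | .node l r, .leaf j, s₁, s₂, h => by simp [enc] at h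
  | .node l₁ r₁, .node l₂ r₂, s₁, s₂, h => by
      simp only [enc, List.cons_append, List.cons.injEq, List.append_assoc] at h
      obtain ⟨-, h⟩ := h
      obtain ⟨rfl, h'⟩ := enc_prefix l₁ l₂ _ _ h
      obtain ⟨rfl, rfl⟩ := enc_prefix r₁ r₂ _ _ h'
      exact ⟨rfl, rfl⟩

lemma enc_inj {k : ℕ} : Function.Injective (enc (k := k)) := fun T₁ T₂ h =>
  (enc_prefix T₁ T₂ [] [] (by simp [h])).1

variable {X : Type*}

/-- restriction of a function to a finset -/
def resk {Y : Type*} (S : Finset X) (g : X → Y) : {x // x ∈ S} → Y := fun x => g x.val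

/-- the finset of restrictions of members of `G` to `S` -/
noncomputable def restFin {Y : Type*} [Finite Y] (S : Finset X) (G : Set (X → Y)) :
    Finset ({x // x ∈ S} → Y) := (Set.toFinite (resk S '' G)).toFinset

lemma mem_restFin {Y : Type*} [Finite Y] {S : Finset X} {G : Set (X → Y)}
    {u : {x // x ∈ S} → Y} : u ∈ restFin S G ↔ ∃ g ∈ G, resk S g = u := by
  simp [restFin, Set.Finite.mem_toFinset, Set.mem_image]

lemma treeClass_card {k : ℕ} (S : Finset X) (H : Set (X → Bool)) (T : LTree k) :
    (restFin S (treeClass H T)).card ≤ (restFin S H).card ^ internals T := by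
  classical
  induction T with
  | leaf i =>
    have : restFin S (treeClass H (LTree.leaf i)) = {resk S (fun _ => i)} := by
      ext u
      rw [mem_restFin, Finset.mem_singleton]
      constructor
      · rintro ⟨g, hg, rfl⟩
        rw [Set.mem_singleton_iff.mp hg]
      · rintro rfl; exact ⟨_, rfl, rfl⟩
    rw [this]; simp [internals]
  | node l r ihl ihr =>
    have hsub : restFin S (treeClass H (LTree.node l r)) ⊆
        ((restFin S H) ×ˢ (restFin S (treeClass H l)) ×ˢ (restFin S (treeClass H r))).image
          (fun p => fun x => if p.1 x then p.2.2 x else p.2.1 x) := by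
      intro u hu
      rw [mem_restFin] at hu
      obtain ⟨g, hg, rfl⟩ := hu
      obtain ⟨c, hc, fl, hfl, fr, hfr, rfl⟩ := hg
      refine Finset.mem_image.mpr ⟨⟨resk S c, resk S fl, resk S fr⟩, ?_, ?_⟩
      · simp only [Finset.mem_product, mem_restFin]
        exact ⟨⟨c, hc, rfl⟩, ⟨fl, hfl, rfl⟩, ⟨fr, hfr, rfl⟩⟩
      · funext x; rfl
    calc (restFin S (treeClass H (LTree.node l r))).card
        ≤ _ := Finset.card_le_card hsub
      _ ≤ _ := Finset.card_image_le
      _ = (restFin S H).card *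
            ((restFin S (treeClass H l)).card * (restFin S (treeClass H r)).card) := by
          simp [Finset.card_product]
      _ ≤ (restFin S H).card *
            ((restFin S H).card ^ internals l * (restFin S H).card ^ internals r) :=
          Nat.mul_le_mul_left _ (Nat.mul_le_mul ihl ihr)
      _ = (restFin S H).card ^ internals (LTree.node l r) := by
          rw [show internals (LTree.node l r) = internals l + internals r + 1 from rfl]; ring

lemma sum_choose_le (m D : ℕ) : ∑ i ∈ Finset.range (D + 1), m.choose i ≤ (m + 1) ^ D := by
  have h : (m + 1) ^ D = ∑ i ∈ Finset.range (D + 1), m ^ i * 1 ^ (D - i) * D.choose i :=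
    add_pow m 1 D
  rw [h]
  refine Finset.sum_le_sum fun i hi => ?_
  have h1 : m.choose i ≤ m ^ i := Nat.choose_le_pow m i
  have h2 : 0 < D.choose i := Nat.choose_pos (by have := Finset.mem_range.mp hi; omega)
  have h3 : m ^ i * 1 ^ (D - i) * D.choose i = m ^ i * D.choose i := by
    rw [one_pow, mul_one]
  rw [h3]
  exact le_trans h1 (Nat.le_mul_of_pos_right _ h2)

lemma restH_card_le (H : Set (X → Bool)) (d : ℕ) (hH : VCDimLE H (d + 1)) (S : Finset X) :
    (restFin S H).card ≤ (S.card + 1) ^ (d + 1) := by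
  classical
  set 𝒜 : Finset (Finset {x // x ∈ S}) :=
    (restFin S H).image (fun h => Finset.univ.filter (fun x => h x = true)) with h𝒜
  have hinj : Set.InjOn (fun h : {x // x ∈ S} → Bool => Finset.univ.filter (fun x => h x = true))
      (restFin S H) := by
    intro h₁ _ h₂ _ hEq
    funext x
    have hx := Finset.ext_iff.mp hEq x
    simp only [Finset.mem_filter, Finset.mem_univ, true_and] at hx
    cases hb1 : h₁ x <;> cases hb2 : h₂ x <;> simp [hb1, hb2] at hx ⊢
  have hcard𝒜 : 𝒜.card = (restFin S H).card := Finset.card_image_of_injOn hinj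
  have hshat : ∀ B ∈ 𝒜.shatterer, B.card ≤ d + 1 := by
    intro B hB
    rw [Finset.mem_shatterer] at hB
    set S' : Finset X := B.image Subtype.val with hS'
    have hcardS' : S'.card = B.card := Finset.card_image_of_injective _ Subtype.val_injective
    have hle := hH S' ?_
    · omega
    intro b
    obtain ⟨A, hA, hAB⟩ := hB (t := B.filter (fun x => b x.val)) (Finset.filter_subset _ _)
    rw [h𝒜, Finset.mem_image] at hA
    obtain ⟨hres, hresmem, rfl⟩ := hA
    rw [mem_restFin] at hresmem
    obtain ⟨h', hh', rfl⟩ := hresmem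
    refine ⟨h', hh', ?_⟩
    intro x hx
    rw [hS', Finset.mem_image] at hx
    obtain ⟨y, hyB, rfl⟩ := hx
    have h1 := Finset.ext_iff.mp hAB y
    simp only [Finset.mem_inter, Finset.mem_filter, Finset.mem_univ, true_and, hyB,
      true_and] at h1
    cases hb : b y.val <;> cases hh : h' y.val <;>
      simp [hb, hh, resk] at h1 ⊢
  have h1 : (restFin S H).card ≤ 𝒜.shatterer.card :=
    hcard𝒜 ▸ Finset.card_le_card_shatterer 𝒜
  have h2 : 𝒜.shatterer ⊆
      (Finset.range (d + 2)).biUnion (fun i => Finset.univ.powersetCard i) := by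
    intro B hB
    rw [Finset.mem_biUnion]
    refine ⟨B.card, Finset.mem_range.mpr (by have := hshat B hB; omega),
      Finset.mem_powersetCard_univ.mpr rfl⟩
  have h3 : 𝒜.shatterer.card ≤
      ∑ i ∈ Finset.range (d + 2), ((Finset.univ : Finset {x // x ∈ S}).powersetCard i).card :=
    le_trans (Finset.card_le_card h2) Finset.card_biUnion_le
  have h4 : ∀ i, ((Finset.univ : Finset {x // x ∈ S}).powersetCard i).card = S.card.choose i := by
    intro i
    rw [Finset.card_powersetCard, Finset.card_univ, Fintype.card_coe]
  calc (restFin S H).card ≤ 𝒜.shatterer.card := h1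
    _ ≤ ∑ i ∈ Finset.range (d + 2), ((Finset.univ : Finset {x // x ∈ S}).powersetCard i).card := h3
    _ = ∑ i ∈ Finset.range (d + 1 + 1), S.card.choose i := by
        apply Finset.sum_congr rfl; intro i _; exact h4 i
    _ ≤ (S.card + 1) ^ (d + 1) := sum_choose_le _ _

lemma pow_le_rest {Y : Type*} [Finite Y] (G : Set (X → Y)) (S : Finset X)
    (h : GShatters G ↑S) : 2 ^ S.card ≤ (restFin S G).card := by
  classical
  obtain ⟨f, hf⟩ := h
  have key : ∀ T : Finset X, T ⊆ S → ∃ g ∈ G,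
      (∀ x ∈ (T : Set X), g x = f x) ∧ ∀ x ∈ (S : Set X) \ (T : Set X), g x ≠ f x := by
    intro T hT
    exact hf ↑T (Finset.coe_subset.mpr hT)
  choose g hgG hg1 hg2 using key
  rw [← Finset.card_powerset]
  apply Finset.card_le_card_of_injOn
    (fun T => if hT : T ⊆ S then resk S (g T hT) else resk S f)
  · intro T hT
    rw [Finset.mem_coe, Finset.mem_powerset] at hT
    beta_reduce
    rw [Finset.mem_coe, dif_pos hT, mem_restFin]
    exact ⟨_, hgG T hT, rfl⟩
  · intro T₁ h₁ T₂ h₂ hEq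
    rw [Finset.mem_coe, Finset.mem_powerset] at h₁ h₂
    simp only [dif_pos h₁, dif_pos h₂] at hEq
    have key2 : ∀ x (hx : x ∈ S), g T₁ h₁ x = g T₂ h₂ x := fun x hx =>
      congrFun hEq ⟨x, hx⟩
    have main : ∀ (U₁ : Finset X) (hU₁ : U₁ ⊆ S) (U₂ : Finset X) (hU₂ : U₂ ⊆ S),
        (∀ x (hx : x ∈ S), g U₁ hU₁ x = g U₂ hU₂ x) → ∀ x ∈ U₁, x ∈ U₂ := by
      intro U₁ hU₁ U₂ hU₂ hgg x hx1
      by_contra hx2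
      have hxS : x ∈ S := hU₁ hx1
      have e1 : g U₁ hU₁ x = f x := hg1 _ _ x (by simpa using hx1)
      have e2 : g U₂ hU₂ x ≠ f x := hg2 _ _ x ⟨by simpa using hxS, by simpa using hx2⟩
      exact e2 (by rw [← hgg x hxS, e1])
    ext x
    exact ⟨fun hx => main T₁ h₁ T₂ h₂ key2 x hx,
      fun hx => main T₂ h₂ T₁ h₁ (fun x hx => (key2 x hx).symm) x hx⟩

lemma treesFor_finite (k : ℕ) : {T : LTree k | T.IsTreeFor}.Finite := by
  apply Set.Finite.of_finite_image (f := enc) ?_ (enc_inj.injOn)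
  apply Set.Finite.subset
    (Set.finite_range (fun v : List.Vector (Option (Fin k)) (2 * k - 1) => v.toList))
  rintro l ⟨T, hT, rfl⟩
  have hlen : (enc T).length = 2 * k - 1 := by
    have h1 := enc_length T
    have h2 := labels_length T
    have h3 := hT.length_eq
    rw [List.length_finRange] at h3
    omega
  exact ⟨⟨enc T, hlen⟩, rfl⟩

lemma treesFor_card (k : ℕ) : (treesFor_finite k).toFinset.card ≤ (k + 1) ^ (2 * k - 1) := by
  classical
  have hbound := Finset.card_le_card_of_injOn
    (s := (treesFor_finite k).toFinset) (t := (Finset.univ : Finset (List.Vector (Option (Fin k)) (2 * k - 1))))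
    (fun T : LTree k => if h : (enc T).length = 2 * k - 1 then (⟨enc T, h⟩ : List.Vector _ _)
      else ⟨List.replicate (2 * k - 1) none, by simp⟩)
    (fun T _ => Finset.mem_univ _) ?_
  · calc (treesFor_finite k).toFinset.card
        ≤ (Finset.univ : Finset (List.Vector (Option (Fin k)) (2 * k - 1))).card := hbound
      _ = (k + 1) ^ (2 * k - 1) := by
          rw [Finset.card_univ, card_vector, Fintype.card_option, Fintype.card_fin]
  · intro T₁ h₁ T₂ h₂ hEq
    have hlen : ∀ T : LTree k, T.IsTreeFor → (enc T).length = 2 * k - 1 := by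
      intro T hT
      have h1 := enc_length T
      have h2 := labels_length T
      have h3 := hT.length_eq
      rw [List.length_finRange] at h3
      omega
    have h₁' : T₁.IsTreeFor := by
      have := h₁; rw [Finset.mem_coe, Set.Finite.mem_toFinset] at this; exact this
    have h₂' : T₂.IsTreeFor := by
      have := h₂; rw [Finset.mem_coe, Set.Finite.mem_toFinset] at this; exact this
    simp only [dif_pos (hlen T₁ h₁'), dif_pos (hlen T₂ h₂')] at hEq
    exact enc_inj (by simpa [hlen T₁ h₁', hlen T₂ h₂'] using congrArg Subtype.val hEq)

theorem main_count (H : Set (X → Bool)) (d k : ℕ) (hH : VCDimLE H (d + 1))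
    (S : Finset X) (hsh : GShatters (treesClass H k) ↑S) :
    2 ^ S.card ≤ (k + 1) ^ (2 * k - 1) * (S.card + 1) ^ ((d + 1) * (k - 1)) := by
  classical
  have h1 : 2 ^ S.card ≤ (restFin S (treesClass H k)).card := pow_le_rest _ _ hsh
  set 𝒯 := (treesFor_finite k).toFinset with h𝒯
  have h2 : restFin S (treesClass H k) ⊆
      𝒯.biUnion (fun T => restFin S (treeClass H T)) := by
    intro u hu
    rw [mem_restFin] at hu
    obtain ⟨g, hg, rfl⟩ := hu
    obtain ⟨T, hT, hgT⟩ := Set.mem_iUnion₂.mp hg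
    rw [Finset.mem_biUnion]
    exact ⟨T, by rw [h𝒯, Set.Finite.mem_toFinset]; exact hT,
      mem_restFin.mpr ⟨g, hgT, rfl⟩⟩
  have h3 : ∀ T ∈ 𝒯, (restFin S (treeClass H T)).card ≤
      (S.card + 1) ^ ((d + 1) * (k - 1)) := by
    intro T hT
    have hTf : T.IsTreeFor := by rwa [h𝒯, Set.Finite.mem_toFinset] at hT
    have hint : internals T = k - 1 := by
      have h1 := labels_length T
      have h2 := hTf.length_eq
      rw [List.length_finRange] at h2
      omega
    calc (restFin S (treeClass H T)).card
        ≤ (restFin S H).card ^ internals T := treeClass_card S H T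
      _ ≤ ((S.card + 1) ^ (d + 1)) ^ internals T :=
          Nat.pow_le_pow_left (restH_card_le H d hH S) _
      _ = (S.card + 1) ^ ((d + 1) * (k - 1)) := by rw [← pow_mul, hint]
  calc 2 ^ S.card ≤ (restFin S (treesClass H k)).card := h1
    _ ≤ (𝒯.biUnion (fun T => restFin S (treeClass H T))).card := Finset.card_le_card h2
    _ ≤ ∑ T ∈ 𝒯, (restFin S (treeClass H T)).card := Finset.card_biUnion_le
    _ ≤ 𝒯.card * (S.card + 1) ^ ((d + 1) * (k - 1)) := by
        have := Finset.sum_le_card_nsmul 𝒯 _ _ h3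
        simpa [smul_eq_mul] using this
    _ ≤ (k + 1) ^ (2 * k - 1) * (S.card + 1) ^ ((d + 1) * (k - 1)) :=
        Nat.mul_le_mul_right _ (treesFor_card k)

set_option maxHeartbeats 1000000 in
lemma numeric (d k m : ℕ) (hd : 2 ≤ d) (hk : 2 ≤ k)
    (h : 2 ^ m ≤ (k + 1) ^ (2 * k - 1) * (m + 1) ^ ((d + 1) * (k - 1))) :
    (m : ℝ) ≤ 100 * d * k * Real.log (d * k) := by
  have hRn : ((2 ^ m : ℕ) : ℝ) ≤ (((k + 1) ^ (2 * k - 1) * (m + 1) ^ ((d + 1) * (k - 1)) : ℕ) : ℝ) :=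
    Nat.cast_le.mpr h
  push_cast at hRn
  set D := (d : ℝ) with hD
  set K := (k : ℝ) with hK
  set M := (m : ℝ) with hM
  have hD2 : (2 : ℝ) ≤ D := by rw [hD]; exact_mod_cast hd
  have hK2 : (2 : ℝ) ≤ K := by rw [hK]; exact_mod_cast hk
  have hM0 : (0 : ℝ) ≤ M := by rw [hM]; exact_mod_cast Nat.zero_le m
  have hDK0 : (0 : ℝ) ≤ (D - 2) * (K - 2) := mul_nonneg (by linarith) (by linarith)
  have ha4 : (4 : ℝ) ≤ D * K := by linarith [hDK0]
  have haPos : (0 : ℝ) < D * K := by linarith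
  set L := Real.log (D * K) with hL
  have hl2 : (0.6931471803 : ℝ) < Real.log 2 := Real.log_two_gt_d9
  have hlog4 : Real.log (4 : ℝ) = 2 * Real.log 2 := by
    rw [show (4 : ℝ) = 2 ^ 2 by norm_num, Real.log_pow]
    push_cast; ring
  have hLlb : 2 * Real.log 2 ≤ L := by
    rw [hL, ← hlog4]
    exact Real.log_le_log (by norm_num) ha4
  have hLpos : 0 < L := by linarith
  have hpos1 : (0 : ℝ) < ((K : ℝ) + 1) ^ (2 * k - 1) := by positivity
  have hpos2 : (0 : ℝ) < ((M : ℝ) + 1) ^ ((d + 1) * (k - 1)) := by positivity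
  have hlog : M * Real.log 2 ≤
      ((2 * k - 1 : ℕ) : ℝ) * Real.log (K + 1) +
        (((d + 1) * (k - 1) : ℕ) : ℝ) * Real.log (M + 1) := by
    have h1 : Real.log ((2 : ℝ) ^ m) ≤
        Real.log (((K : ℝ) + 1) ^ (2 * k - 1) * ((M : ℝ) + 1) ^ ((d + 1) * (k - 1))) :=
      Real.log_le_log (by positivity) hRn
    rw [Real.log_pow, Real.log_mul (ne_of_gt hpos1) (ne_of_gt hpos2), Real.log_pow,
      Real.log_pow] at h1
    exact h1
  have hlogK1 : (0 : ℝ) ≤ Real.log (K + 1) := Real.log_nonneg (by linarith)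
  have hlogM1 : (0 : ℝ) ≤ Real.log (M + 1) := Real.log_nonneg (by linarith)
  have hcast1 : ((2 * k - 1 : ℕ) : ℝ) ≤ 2 * K := by
    have h1 : (2 * k - 1 : ℕ) ≤ 2 * k := by omega
    calc ((2 * k - 1 : ℕ) : ℝ) ≤ ((2 * k : ℕ) : ℝ) := by exact_mod_cast h1
      _ = 2 * K := by rw [hK]; push_cast; ring
  have hcast2 : (((d + 1) * (k - 1) : ℕ) : ℝ) ≤ (D + 1) * K := by
    have h1 : ((d + 1) * (k - 1) : ℕ) ≤ (d + 1) * k := by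
      apply Nat.mul_le_mul_left; omega
    calc (((d + 1) * (k - 1) : ℕ) : ℝ) ≤ (((d + 1) * k : ℕ) : ℝ) := by exact_mod_cast h1
      _ = (D + 1) * K := by rw [hD, hK]; push_cast; ring
  have hmain : M * Real.log 2 ≤ 2 * K * Real.log (K + 1) + (D + 1) * K * Real.log (M + 1) :=
    le_trans hlog (add_le_add (mul_le_mul_of_nonneg_right hcast1 hlogK1)
      (mul_le_mul_of_nonneg_right hcast2 hlogM1))
  have hK1L : Real.log (K + 1) ≤ 2 * L := by
    have hKK : (0 : ℝ) ≤ (K - 2) * K := mul_nonneg (by linarith) (by linarith)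
    have hKsq : K + 1 ≤ K ^ 2 := by nlinarith [hKK, hK2]
    have hKle : Real.log K ≤ L := by
      rw [hL]
      have hd1 : (0:ℝ) ≤ (D - 1) * K := mul_nonneg (by linarith) (by linarith)
      have hDK : K ≤ D * K := by linarith [hd1]
      exact Real.log_le_log (by linarith) hDK
    calc Real.log (K + 1) ≤ Real.log (K ^ 2) := Real.log_le_log (by linarith) hKsq
      _ = 2 * Real.log K := by rw [Real.log_pow]; push_cast; ring
      _ ≤ 2 * L := by linarith
  have hMt : Real.log (M + 1) ≤ (M + 1) / (16 * (D * K)) + 3 * L := by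
    have ht : (0 : ℝ) < 16 * (D * K) := by linarith
    have h1 : Real.log ((M + 1) / (16 * (D * K))) ≤ (M + 1) / (16 * (D * K)) - 1 :=
      Real.log_le_sub_one_of_pos (by positivity)
    rw [Real.log_div (by linarith) (ne_of_gt ht)] at h1
    have h2 : Real.log (16 * (D * K)) = Real.log 16 + L := by
      rw [Real.log_mul (by norm_num) (ne_of_gt haPos), hL]
    have h3 : Real.log (16 : ℝ) = 4 * Real.log 2 := by
      rw [show (16 : ℝ) = 2 ^ 4 by norm_num, Real.log_pow]
      push_cast; ring
    linarith
  have haL : (5 : ℝ) ≤ D * K * L := by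
    have h1 : 4 * (2 * Real.log 2) ≤ (D * K) * L :=
      mul_le_mul ha4 hLlb (by linarith) (by linarith)
    linarith
  have hstep : M * Real.log 2 ≤ 8 * (D * K) * L + (M + 1) / 8 := by
    have t1a : 2 * K * Real.log (K + 1) ≤ 2 * K * (2 * L) :=
      mul_le_mul_of_nonneg_left hK1L (by linarith)
    have ht1 : (0:ℝ) ≤ (D - 2) * K * L :=
      mul_nonneg (mul_nonneg (by linarith) (by linarith)) hLpos.le
    have t1b : 2 * K * (2 * L) ≤ 2 * (D * K) * L := by linarith [ht1]
    have ht2 : (0:ℝ) ≤ (D - 1) * K := mul_nonneg (by linarith) (by linarith)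
    have hDK1 : (D + 1) * K ≤ 2 * (D * K) := by linarith [ht2]
    have t2a : (D + 1) * K * Real.log (M + 1) ≤ 2 * (D * K) * Real.log (M + 1) :=
      mul_le_mul_of_nonneg_right hDK1 hlogM1
    have t2b : 2 * (D * K) * Real.log (M + 1) ≤
        2 * (D * K) * ((M + 1) / (16 * (D * K)) + 3 * L) :=
      mul_le_mul_of_nonneg_left hMt (by linarith)
    have t3 : 2 * (D * K) * ((M + 1) / (16 * (D * K)) + 3 * L) =
        (M + 1) / 8 + 6 * (D * K) * L := by
      field_simp
      ring
    linarith
  have hgoal : M ≤ 100 * (D * K) * L := by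
    have e1 : M * (0.6931471803 : ℝ) ≤ M * Real.log 2 :=
      mul_le_mul_of_nonneg_left hl2.le hM0
    linarith
  calc M ≤ 100 * (D * K) * L := hgoal
    _ = 100 * D * K * Real.log (D * K) := by rw [hL]; ring

lemma gshatters_mono {Y : Type*} {G G' : Set (X → Y)} (h : G ⊆ G') {S : Set X}
    (hs : GShatters G S) : GShatters G' S := by
  obtain ⟨f, hf⟩ := hs
  exact ⟨f, fun U hU => by
    obtain ⟨g, hg, h1, h2⟩ := hf U hU
    exact ⟨g, h hg, h1, h2⟩⟩

end Stmt2Aux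

/-- There is a universal constant C > 0 such that for all integers d, k ≥ 2, every
set X and every binary hypothesis class H of VC dimension at most d+1, the graph dimension of
H_trees (the union over all trees T for k classes of H_T) is at most C·d·k·log(d·k); in
particular d_G(H_T) ≤ C·d·k·log(d·k) for every tree T for k classes. -/
theorem stmt2 : ∃ C : ℝ, 0 < C ∧ ∀ (d k : ℕ), 2 ≤ d → 2 ≤ k →
    ∀ (X : Type*) (H : Set (X → Bool)), VCDimLE H (d + 1) →
      (∀ S : Finset X, GShatters (treesClass H k) ↑S →
        (S.card : ℝ) ≤ C * d * k * Real.log (d * k)) ∧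
      (∀ T : LTree k, T.IsTreeFor → ∀ S : Finset X, GShatters (treeClass H T) ↑S →
        (S.card : ℝ) ≤ C * d * k * Real.log (d * k)) := by
  refine ⟨100, by norm_num, fun d k hd hk X H hH => ?_⟩
  have main : ∀ S : Finset X, GShatters (treesClass H k) ↑S →
      (S.card : ℝ) ≤ 100 * d * k * Real.log (d * k) := fun S hsh =>
    Stmt2Aux.numeric d k S.card hd hk (Stmt2Aux.main_count H d k hH S hsh)
  refine ⟨main, fun T hT S hsh => main S (Stmt2Aux.gshatters_mono ?_ hsh)⟩
  intro g hg
  exact Set.mem_biUnion hT hg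
end

section
/- For all integers d, k ≥ 2 and every tree T for k classes, the Natarajan dimension of W^d_T, the class of tree classifiers over T whose internal-node classifiers are halfspaces over ℝ^d, is at least d·(k−1). -/
open MeasureTheory
open scoped ENNReal

namespace Stmt3Aux

def leftLabel {k : ℕ} : LTree k → Fin k
  | .leaf i => i
  | .node l _ => leftLabel l

def rightLabel {k : ℕ} : LTree k → Fin k
  | .leaf i => i
  | .node _ r => rightLabel r

def inodes {k : ℕ} : LTree k → ℕ
  | .leaf _ => 0
  | .node l r => inodes l + inodes r + 1

def F1 {k : ℕ} : LTree k → ℕ → Fin k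
  | .leaf i, _ => i
  | .node l r, j =>
      if j < inodes l then F1 l j
      else if j = inodes l then leftLabel r
      else F1 r (j - inodes l - 1)

def F2 {k : ℕ} : LTree k → ℕ → Fin k
  | .leaf i, _ => i
  | .node l r, j =>
      if j < inodes l then F2 l j
      else if j = inodes l then rightLabel l
      else F2 r (j - inodes l - 1)

lemma labels_length {k : ℕ} (T : LTree k) : T.labels.length = inodes T + 1 := by
  induction T with
  | leaf i => simp [LTree.labels, inodes]
  | node l r ihl ihr => simp [LTree.labels, inodes, ihl, ihr]; omega

lemma leftLabel_mem {k : ℕ} (T : LTree k) : leftLabel T ∈ T.labels := by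
  induction T with
  | leaf i => simp [LTree.labels, leftLabel]
  | node l r ihl ihr => simp [LTree.labels, leftLabel]; exact Or.inl ihl

lemma rightLabel_mem {k : ℕ} (T : LTree k) : rightLabel T ∈ T.labels := by
  induction T with
  | leaf i => simp [LTree.labels, rightLabel]
  | node l r ihl ihr => simp [LTree.labels, rightLabel]; exact Or.inr ihr

lemma F1_ne_F2 {k : ℕ} (T : LTree k) (h : T.labels.Nodup) :
    ∀ j, j < inodes T → F1 T j ≠ F2 T j := by
  induction T with
  | leaf i => simp [inodes]
  | node l r ihl ihr =>
    rw [show (LTree.node l r).labels = l.labels ++ r.labels from rfl,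
      List.nodup_append] at h
    obtain ⟨h1, h2, hdisj⟩ := h
    intro j hj
    rcases lt_trichotomy j (inodes l) with hlt | heq | hgt
    · simpa [F1, F2, hlt] using ihl h1 j hlt
    · have e1 : F1 (LTree.node l r) j = leftLabel r := by simp [F1, heq]
      have e2 : F2 (LTree.node l r) j = rightLabel l := by simp [F2, heq]
      rw [e1, e2]
      intro hEq
      exact hdisj _ (rightLabel_mem l) _ (leftLabel_mem r) hEq.symm
    · have hj' : j - inodes l - 1 < inodes r := by
        simp only [inodes] at hj; omega
      simpa [F1, F2, Nat.lt_asymm hgt, Nat.ne_of_gt hgt] using ihr h2 _ hj'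

/-- the points: group `m` sits at first coordinate `m`, point `i` perturbed by `1/4`
in coordinate `i` (except `i = 0`, which is the group center). -/
noncomputable def ptx (d : ℕ) [NeZero d] (m : ℕ) (i : Fin d) : Fin d → ℝ :=
  fun t => (if t = 0 then (m : ℝ) else 0) + (if t = i ∧ i ≠ 0 then 4⁻¹ else 0)

lemma ptx_apply_zero (d : ℕ) [NeZero d] (m : ℕ) (i : Fin d) : ptx d m i 0 = m := by
  unfold ptx
  have hc : ¬ ((0 : Fin d) = i ∧ i ≠ 0) := by rintro ⟨rfl, h⟩; exact h rfl
  rw [if_pos rfl, if_neg hc, add_zero]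

lemma ptx_inj (d : ℕ) [NeZero d] {m m' : ℕ} {i i' : Fin d}
    (h : ptx d m i = ptx d m' i') : m = m' ∧ i = i' := by
  have h0 := congrFun h 0
  rw [ptx_apply_zero, ptx_apply_zero] at h0
  have hm : m = m' := Nat.cast_injective h0
  refine ⟨hm, ?_⟩
  by_contra hne
  by_cases hi : i = 0
  · have hi' : ¬ i' = 0 := fun h' => hne (hi.trans h'.symm)
    have hx := congrFun h i'
    simp [ptx, hi, hi'] at hx
  · have hx := congrFun h i
    simp [ptx, hi, hne] at hx

/-- the weight vector for node at position `j0`, realizing sign pattern `s` on its own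
group and routing other groups by their first coordinate. -/
noncomputable def wvec (d : ℕ) [NeZero d] (j0 : ℕ) (s : Fin d → Bool) : Fin (d + 1) → ℝ :=
  Fin.snoc
    (fun t => if t = 0 then 1
      else ((if s t then (1 : ℝ) else -1) - (if s 0 then 1 else -1)) / 2)
    ((if s 0 then (1 : ℝ) else -1) / 8 - j0)

lemma sum_eval (d : ℕ) [NeZero d] (j0 m : ℕ) (s : Fin d → Bool) (i : Fin d) :
    ∑ t, wvec d j0 s t * aug (ptx d m i) t
      = (m : ℝ) - j0 + (if s i then 1 else -1) / 8 := by
  rw [Fin.sum_univ_castSucc]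
  simp only [wvec, aug, Fin.snoc_castSucc, Fin.snoc_last, mul_one]
  have key : ∀ t : Fin d,
      (if t = 0 then (1 : ℝ)
        else ((if s t then (1 : ℝ) else -1) - (if s 0 then 1 else -1)) / 2)
        * ptx d m i t
      = (if t = 0 then (m : ℝ) else 0)
        + (if t = i then (if i = 0 then 0
            else ((if s i then (1 : ℝ) else -1) - (if s 0 then 1 else -1)) / 8) else 0) := by
    intro t
    by_cases ht0 : t = 0
    · subst ht0
      by_cases hi0 : i = 0
      · simp [ptx, hi0]
      · have h0i : ¬ ((0 : Fin d) = i) := fun h => hi0 h.symm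
        simp [ptx, hi0, h0i]
    · by_cases hti : t = i
      · have hi0 : ¬ i = 0 := fun h => ht0 (hti.trans h)
        have hc : t = i ∧ i ≠ 0 := ⟨hti, hi0⟩
        simp only [ptx, if_neg ht0, if_pos hc, if_pos hti, if_neg hi0, zero_add, hti]
        simp only [hi0, true_and, ne_eq, not_false_iff, if_true, if_pos trivial]
        ring
      · simp [ptx, ht0, hti]
  rw [Finset.sum_congr rfl (fun t _ => key t), Finset.sum_add_distrib,
    Finset.sum_ite_eq' Finset.univ (0 : Fin d) (fun _ => (m : ℝ)),
    Finset.sum_ite_eq' Finset.univ i, if_pos (Finset.mem_univ _),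
    if_pos (Finset.mem_univ _)]
  by_cases hi0 : i = 0
  · subst hi0; rw [if_pos rfl]; ring
  · rw [if_neg hi0]; ring

lemma hs_eval (d : ℕ) [NeZero d] (j0 m : ℕ) (s : Fin d → Bool) (i : Fin d) :
    decide (0 ≤ ∑ t, wvec d j0 s t * aug (ptx d m i) t)
      = (if m < j0 then false else if j0 < m then true else s i) := by
  rw [sum_eval]
  have hσ : -1 ≤ (if s i then (1 : ℝ) else -1) ∧ (if s i then (1 : ℝ) else -1) ≤ 1 := by
    split_ifs <;> norm_num
  rcases lt_trichotomy m j0 with h | h | h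
  · have h1 : (m : ℝ) + 1 ≤ j0 := by exact_mod_cast h
    have h2 : ¬ (0 ≤ (m : ℝ) - j0 + (if s i then (1 : ℝ) else -1) / 8) := by
      push_neg; linarith [hσ.2]
    rw [decide_eq_false h2, if_pos h]
  · subst h
    rw [if_neg (lt_irrefl m), if_neg (lt_irrefl m)]
    cases hsi : s i <;> norm_num
  · have h1 : (j0 : ℝ) + 1 ≤ m := by exact_mod_cast h
    have h2 : 0 ≤ (m : ℝ) - j0 + (if s i then (1 : ℝ) else -1) / 8 := by
      linarith [hσ.1]
    rw [decide_eq_true h2, if_neg (Nat.lt_asymm h), if_pos h]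

lemma main {k d : ℕ} [NeZero d] (T : LTree k) (s : ℕ → Fin d → Bool) :
    ∀ o : ℕ, ∃ g ∈ treeClass (halfspace d) T,
      (∀ j, j < inodes T → ∀ i,
        g (ptx d (o + j) i) = if s (o + j) i then F1 T j else F2 T j) ∧
      (∀ m, m < o → ∀ i, g (ptx d m i) = leftLabel T) ∧
      (∀ m, o + inodes T ≤ m → ∀ i, g (ptx d m i) = rightLabel T) := by
  induction T with
  | leaf a =>
    intro o
    exact ⟨fun _ => a, rfl, fun j hj => by simp [inodes] at hj,
      fun m _ i => rfl, fun m _ i => rfl⟩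
  | node l r ihl ihr =>
    intro o
    obtain ⟨gl, hgl, hla, hlb, hlc⟩ := ihl o
    obtain ⟨gr, hgr, hra, hrb, hrc⟩ := ihr (o + inodes l + 1)
    set j0 := o + inodes l with hj0
    refine ⟨fun x => if decide (0 ≤ ∑ t, wvec d j0 (s j0) t * aug x t) then gr x else gl x,
      ⟨_, ⟨wvec d j0 (s j0), rfl⟩, gl, hgl, gr, hgr, rfl⟩, ?_, ?_, ?_⟩
    · intro j hj i
      simp only []
      rw [hs_eval]
      rcases lt_trichotomy j (inodes l) with hlt | heq | hgt
      · have hm : o + j < j0 := by omega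
        rw [if_pos hm]
        simp only [Bool.false_eq_true, if_false]
        rw [hla j hlt i]
        simp [F1, F2, hlt]
      · have hm : ¬ (o + j < j0) := by omega
        have hm' : ¬ (j0 < o + j) := by omega
        rw [if_neg hm, if_neg hm']
        have hoj : o + j = j0 := by omega
        rw [hoj]
        cases hsi : s j0 i
        · simp only [Bool.false_eq_true, if_false]
          rw [hlc j0 (by omega) i]
          simp [F1, F2, heq]
        · simp only [if_true]
          rw [hrb j0 (by omega) i]
          simp [F1, F2, heq]
      · have hm : ¬ (o + j < j0) := by omega
        have hm' : j0 < o + j := by omega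
        rw [if_neg hm, if_pos hm']
        simp only [if_true]
        have hj' : j - inodes l - 1 < inodes r := by simp only [inodes] at hj; omega
        have harg : (o + inodes l + 1) + (j - inodes l - 1) = o + j := by omega
        have := hra (j - inodes l - 1) hj' i
        rw [harg] at this
        rw [this]
        simp [F1, F2, Nat.lt_asymm hgt, Nat.ne_of_gt hgt]
    · intro m hm i
      simp only []
      rw [hs_eval, if_pos (by omega : m < j0)]
      simp only [Bool.false_eq_true, if_false]
      rw [hlb m hm i]
      rfl
    · intro m hm i
      simp only [inodes] at hm
      simp only []
      rw [hs_eval, if_neg (by omega : ¬ m < j0), if_pos (by omega : j0 < m)]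
      simp only [if_true]
      rw [hrc m (by omega) i]
      rfl

end Stmt3Aux

open Stmt3Aux in
/-- For all integers d, k ≥ 2 and every tree T for k classes, the Natarajan
dimension of W^d_T (tree classifiers over T with halfspaces over ℝ^d at internal nodes) is at
least d·(k−1). -/
theorem stmt3 (d k : ℕ) (hd : 2 ≤ d) (hk : 2 ≤ k) (T : LTree k) (hT : T.IsTreeFor) :
    ∃ S : Finset (Fin d → ℝ), NShatters (treeClass (halfspace d) T) ↑S ∧
      d * (k - 1) ≤ S.card := by
  classical
  haveI : NeZero d := ⟨by omega⟩
  have hnodup : T.labels.Nodup := hT.nodup_iff.mpr (List.nodup_finRange k)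
  have hlen : inodes T + 1 = k := by
    have hl := hT.length_eq
    rw [labels_length, List.length_finRange] at hl
    exact hl
  set n := inodes T with hn
  have hinj : Function.Injective (fun p : Fin n × Fin d => ptx d p.1 p.2) := by
    intro p q h
    obtain ⟨h1, h2⟩ := ptx_inj d h
    exact Prod.ext (Fin.val_injective h1) h2
  refine ⟨Finset.image (fun p : Fin n × Fin d => ptx d p.1 p.2) Finset.univ, ?_, ?_⟩
  · refine ⟨fun x => F1 T ⌊x 0⌋₊, fun x => F2 T ⌊x 0⌋₊, ?_, ?_⟩
    · rintro x hx
      obtain ⟨p, -, rfl⟩ := Finset.mem_image.mp hx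
      simp only [ptx_apply_zero, Nat.floor_natCast]
      exact F1_ne_F2 T hnodup p.1 p.1.isLt
    · intro T' hT'
      obtain ⟨g, hg, ha, -, -⟩ :=
        main (d := d) T (fun m i => decide (ptx d m i ∈ T')) 0
      refine ⟨g, hg, ?_, ?_⟩
      · intro x hx
        obtain ⟨p, -, rfl⟩ := Finset.mem_image.mp (hT' hx)
        have h1 := ha p.1 p.1.isLt p.2
        rw [zero_add] at h1
        simp [h1, hx, ptx_apply_zero, Nat.floor_natCast]
      · rintro x ⟨hxS, hxT⟩
        obtain ⟨p, -, rfl⟩ := Finset.mem_image.mp hxS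
        have h1 := ha p.1 p.1.isLt p.2
        rw [zero_add] at h1
        simp [h1, hxT, ptx_apply_zero, Nat.floor_natCast]
  · rw [Finset.card_image_of_injective _ hinj, Finset.card_univ, Fintype.card_prod,
      Fintype.card_fin, Fintype.card_fin]
    have : k - 1 = n := by omega
    rw [this, mul_comm]
end

section
/- There exists a universal constant C > 0 such that for all integers d, l ≥ 2, every k ≥ 2, every code matrix M ∈ ℝ^{k×l}, and every binary hypothesis class H ⊆ {±1}^X of VC dimension at most d, the graph dimension of the ECOC class H_M satisfies d_G(H_M) ≤ C·d·l·log(d·l). -/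
open MeasureTheory
open scoped ENNReal

lemma aux_sum_choose_le_pow (n d : ℕ) :
    ∑ i ∈ Finset.range (d+1), n.choose i ≤ (n+1)^d := by
  induction d with
  | zero => simp
  | succ d ih =>
      rw [Finset.sum_range_succ]
      have h1 : n.choose (d+1) ≤ n * n^d := by
        simpa [pow_succ'] using Nat.choose_le_pow n (d+1)
      have h2 : n * n^d ≤ n * (n+1)^d :=
        Nat.mul_le_mul_left _ (Nat.pow_le_pow_left (Nat.le_succ n) d)
      calc ∑ i ∈ Finset.range (d+1), n.choose i + n.choose (d+1)
          ≤ (n+1)^d + n * (n+1)^d := Nat.add_le_add ih (h1.trans h2)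
        _ = (n+1)^(d+1) := by ring

open Classical in
lemma aux_trace_card {X : Type*} (H : Set (X → Bool)) (d : ℕ) (hH : VCDimLE H d)
    (S : Finset X) :
    (S.powerset.filter (fun t => ∃ h ∈ H, ∀ x ∈ S, (h x = true ↔ x ∈ t))).card
      ≤ (S.card + 1)^d := by
  classical
  set 𝒜 := S.powerset.filter (fun t => ∃ h ∈ H, ∀ x ∈ S, (h x = true ↔ x ∈ t)) with h𝒜
  have key : 𝒜.shatterer ⊆ S.powerset.filter (fun s => s.card ≤ d) := by
    intro s hs
    rw [Finset.mem_shatterer] at hs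
    have hsS : s ⊆ S := by
      obtain ⟨u, hu, hsu⟩ := hs.exists_superset
      rw [h𝒜, Finset.mem_filter, Finset.mem_powerset] at hu
      exact hsu.trans hu.1
    refine Finset.mem_filter.mpr ⟨Finset.mem_powerset.mpr hsS, hH s ?_⟩
    intro b
    obtain ⟨u, hu, hsu⟩ := hs (t := s.filter (fun x => b x = true)) (Finset.filter_subset _ _)
    rw [h𝒜, Finset.mem_filter, Finset.mem_powerset] at hu
    obtain ⟨-, h, hhH, hh⟩ := hu
    refine ⟨h, hhH, fun x hx => ?_⟩
    have hxS : x ∈ S := hsS hx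
    have h1 : h x = true ↔ x ∈ u := hh x hxS
    have h2 : x ∈ u ↔ b x = true := by
      constructor
      · intro hxu
        have : x ∈ s ∩ u := Finset.mem_inter.mpr ⟨hx, hxu⟩
        rw [hsu, Finset.mem_filter] at this
        exact this.2
      · intro hbx
        have : x ∈ s ∩ u := by
          rw [hsu, Finset.mem_filter]; exact ⟨hx, hbx⟩
        exact (Finset.mem_inter.mp this).2
    have : (h x = true) ↔ (b x = true) := h1.trans h2
    cases hb : b x <;> cases hh : h x <;> simp_all
  calc 𝒜.card ≤ 𝒜.shatterer.card := Finset.card_le_card_shatterer 𝒜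
    _ ≤ (S.powerset.filter (fun s => s.card ≤ d)).card := Finset.card_le_card key
    _ ≤ ((Finset.range (d+1)).biUnion (fun i => S.powersetCard i)).card := by
        apply Finset.card_le_card
        intro s hs
        rw [Finset.mem_filter, Finset.mem_powerset] at hs
        exact Finset.mem_biUnion.mpr ⟨s.card, Finset.mem_range.mpr (Nat.lt_succ_of_le hs.2),
          Finset.mem_powersetCard.mpr ⟨hs.1, rfl⟩⟩
    _ ≤ ∑ i ∈ Finset.range (d+1), (S.powersetCard i).card := Finset.card_biUnion_le
    _ = ∑ i ∈ Finset.range (d+1), S.card.choose i := by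
        simp [Finset.card_powersetCard]
    _ ≤ (S.card + 1)^d := aux_sum_choose_le_pow _ _

lemma aux_main_count {X : Type*} {k : ℕ} [NeZero k] {l : ℕ} (H : Set (X → Bool))
    (M : Fin k → Fin l → ℝ) (d : ℕ) (hH : VCDimLE H d) (S : Finset X)
    (hSh : GShatters (ecocClass H M) ↑S) :
    2 ^ S.card ≤ ((S.card + 1) ^ d) ^ l := by
  classical
  obtain ⟨f, hf⟩ := hSh
  have key : ∀ T : Finset X, ∃ hT : Fin l → X → Bool, T ⊆ S →
      ((∀ j, hT j ∈ H) ∧ (∀ x ∈ T, decode M (fun j => hT j x) = f x) ∧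
        (∀ x ∈ S, x ∉ T → decode M (fun j => hT j x) ≠ f x)) := by
    intro T
    by_cases hTS : T ⊆ S
    · obtain ⟨g, hg, hag, hdis⟩ := hf ↑T (by exact_mod_cast hTS)
      obtain ⟨h, hhH, rfl⟩ := hg
      exact ⟨h, fun _ => ⟨hhH, fun x hx => hag x (by exact_mod_cast hx),
        fun x hxS hxT => hdis x ⟨by exact_mod_cast hxS, by exact_mod_cast hxT⟩⟩⟩
    · exact ⟨fun _ _ => true, fun h => absurd h hTS⟩
  choose hT hspec using key
  set 𝒜 := S.powerset.filter (fun t => ∃ h ∈ H, ∀ x ∈ S, (h x = true ↔ x ∈ t)) with h𝒜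
  set Φ : Finset X → (Fin l → Finset X) :=
    fun T => fun j => S.filter (fun x => hT T j x = true) with hΦ
  have hmaps : ∀ T ∈ S.powerset, Φ T ∈ Fintype.piFinset (fun _ : Fin l => 𝒜) := by
    intro T hTp
    rw [Finset.mem_powerset] at hTp
    obtain ⟨hmem, -, -⟩ := hspec T hTp
    rw [Fintype.mem_piFinset]
    intro j
    rw [h𝒜, Finset.mem_filter, Finset.mem_powerset]
    exact ⟨Finset.filter_subset _ _, hT T j, hmem j,
      fun x hxS => by simp [hΦ, Finset.mem_filter, hxS]⟩
  have hinj : Set.InjOn Φ ↑S.powerset := by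
    intro T1 hT1 T2 hT2 heq
    replace hT1 : T1 ⊆ S := by simpa using hT1
    replace hT2 : T2 ⊆ S := by simpa using hT2
    obtain ⟨-, hag1, hdis1⟩ := hspec T1 hT1
    obtain ⟨-, hag2, hdis2⟩ := hspec T2 hT2
    have hpt : ∀ x ∈ S, (fun j => hT T1 j x) = (fun j => hT T2 j x) := by
      intro x hxS
      funext j
      have h1 : x ∈ S.filter (fun x => hT T1 j x = true) ↔
          x ∈ S.filter (fun x => hT T2 j x = true) := by
        have := congrFun heq j
        simp only [hΦ] at this
        rw [this]
      simp only [Finset.mem_filter, hxS, true_and] at h1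
      cases hx1 : hT T1 j x <;> cases hx2 : hT T2 j x <;> simp_all
    have hsub : ∀ T1' T2' : Finset X, T1' ⊆ S → T2' ⊆ S →
        (∀ x ∈ T1', decode M (fun j => hT T1' j x) = f x) →
        (∀ x ∈ S, x ∉ T2' → decode M (fun j => hT T2' j x) ≠ f x) →
        (∀ x ∈ S, (fun j => hT T1' j x) = (fun j => hT T2' j x)) → T1' ⊆ T2' := by
      intro A B hA hB hagA hdisB hptAB x hxA
      by_contra hxB
      have hxS : x ∈ S := hA hxA
      exact hdisB x hxS hxB (by rw [← hptAB x hxS]; exact hagA x hxA)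
    exact le_antisymm (hsub T1 T2 hT1 hT2 hag1 hdis2 hpt)
      (hsub T2 T1 hT2 hT1 hag2 hdis1 fun x hx => (hpt x hx).symm)
  calc 2 ^ S.card = S.powerset.card := (Finset.card_powerset S).symm
    _ ≤ (Fintype.piFinset (fun _ : Fin l => 𝒜)).card :=
        Finset.card_le_card_of_injOn Φ hmaps hinj
    _ = 𝒜.card ^ l := by rw [Fintype.card_piFinset]; simp
    _ ≤ ((S.card + 1) ^ d) ^ l :=
        Nat.pow_le_pow_left (aux_trace_card H d hH S) l

lemma aux_arith (n d l : ℕ) (hd : 2 ≤ d) (hl : 2 ≤ l)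
    (h : 2 ^ n ≤ ((n + 1) ^ d) ^ l) :
    (n : ℝ) ≤ 5 * d * l * Real.log (d * l) := by
  have hd' : (2:ℝ) ≤ d := by exact_mod_cast hd
  have hl' : (2:ℝ) ≤ l := by exact_mod_cast hl
  set a : ℝ := (d : ℝ) * l with ha_def
  have ha : (4:ℝ) ≤ a := by nlinarith
  have ha0 : (0:ℝ) < a := by linarith
  have hn1 : (0:ℝ) < (n:ℝ) + 1 := by positivity
  have hcast : (2:ℝ) ^ n ≤ ((n:ℝ) + 1) ^ (d * l) := by
    rw [← pow_mul] at h
    exact_mod_cast h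
  have hlog : (n:ℝ) * Real.log 2 ≤ a * Real.log ((n:ℝ) + 1) := by
    have := Real.log_le_log (by positivity) hcast
    rw [Real.log_pow, Real.log_pow] at this
    calc (n:ℝ) * Real.log 2 = (n:ℕ) * Real.log 2 := by norm_num
      _ ≤ (d * l : ℕ) * Real.log ((n:ℝ) + 1) := this
      _ = a * Real.log ((n:ℝ) + 1) := by push_cast; ring
  have hdiv : Real.log (((n:ℝ) + 1) / (8 * a)) ≤ ((n:ℝ) + 1) / (8 * a) - 1 :=
    Real.log_le_sub_one_of_pos (by positivity)
  have hsplit : Real.log (((n:ℝ) + 1) / (8 * a)) =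
      Real.log ((n:ℝ) + 1) - Real.log (8 * a) :=
    Real.log_div (by positivity) (by positivity)
  have hstep : (n:ℝ) * Real.log 2 ≤ a * Real.log (8 * a) + ((n:ℝ) + 1) / 8 - a := by
    have h1 : Real.log ((n:ℝ) + 1) ≤ Real.log (8 * a) + (((n:ℝ) + 1) / (8 * a) - 1) := by
      rw [hsplit] at hdiv; linarith
    have h2 : a * (((n:ℝ) + 1) / (8 * a)) = ((n:ℝ) + 1) / 8 := by
      field_simp
    nlinarith [mul_le_mul_of_nonneg_left h1 ha0.le]
  have hlog8a : Real.log (8 * a) ≤ (5/2) * Real.log a := by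
    have h8 : Real.log (8 * a) = Real.log 8 + Real.log a :=
      Real.log_mul (by norm_num) (by positivity)
    have h4a : Real.log 4 ≤ Real.log a := Real.log_le_log (by norm_num) ha
    have hl8 : Real.log 8 = 3 * Real.log 2 := by
      rw [show (8:ℝ) = 2^3 by norm_num, Real.log_pow]; norm_num
    have hl4 : Real.log 4 = 2 * Real.log 2 := by
      rw [show (4:ℝ) = 2^2 by norm_num, Real.log_pow]; norm_num
    linarith
  have hla : 0 < Real.log a := Real.log_pos (by linarith)
  have hl2 : (0.6931471803 : ℝ) < Real.log 2 := Real.log_two_gt_d9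
  have hfin : (n:ℝ) ≤ 5 * a * Real.log a := by
    nlinarith [Nat.cast_nonneg (α := ℝ) n]
  calc (n:ℝ) ≤ 5 * a * Real.log a := hfin
    _ = 5 * d * l * Real.log (d * l) := by rw [ha_def]; push_cast; ring

/-- There is a universal constant C > 0 such that for all integers d, l ≥ 2, every
k ≥ 2, every code matrix M ∈ ℝ^{k×l} and every binary class H of VC dimension at most d, the
graph dimension of the ECOC class H_M is at most C·d·l·log(d·l). -/
theorem stmt4 : ∃ C : ℝ, 0 < C ∧ ∀ (d l k : ℕ) [NeZero k], 2 ≤ d → 2 ≤ l → 2 ≤ k →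
    ∀ (X : Type*) (H : Set (X → Bool)) (M : Fin k → Fin l → ℝ), VCDimLE H d →
      ∀ S : Finset X, GShatters (ecocClass H M) ↑S →
        (S.card : ℝ) ≤ C * d * l * Real.log (d * l) := by
  refine ⟨5, by norm_num, fun d l k _ hd hl hk X H M hH S hSh => ?_⟩
  exact aux_arith S.card d l hd hl (aux_main_count H M d hH S hSh)
end
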